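/- arXiv:1306.4143 — 8 statements merged into one kernel-verified Lean document; each statement's English description precedes it below -/
import Mathlib

section
/- Let n ≥ 4 and 2 ≤ a ≤ n−1 be integers. A point v ∈ ℂⁿ satisfies the critical-point equations of Z^n_a, namely a·v_j^{a−1} = ∏_{k≠j} v_k for every index j, if and only if either v = 0, or there exists ξ ∈ ℂ with ξ^{n−a} = a^a such that v_j^a = ξ for every j and ∏_{j} v_j = a·ξ. -/
/-- For `n ≥ 4` and `2 ≤ a ≤ n−1`, a point `v ∈ ℂⁿ` satisfies the
critical-point equations of `Z^n_a`, namely `a·v_j^{a−1} = ∏_{k≠j} v_k` for every `j`,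
iff either `v = 0` or there is `ξ` with `ξ^{n−a} = a^a`, `v_j^a = ξ` for all `j`, and
`∏_j v_j = a·ξ`. -/
theorem critical_points_of_Zna (n a : ℕ) (hn : 4 ≤ n) (ha : 2 ≤ a) (han : a ≤ n - 1)
    (v : Fin n → ℂ) :
    (∀ j, (a : ℂ) * v j ^ (a - 1) = ∏ k ∈ Finset.univ.erase j, v k) ↔
      (v = 0 ∨ ∃ ξ : ℂ, ξ ^ (n - a) = (a : ℂ) ^ a ∧ (∀ j, v j ^ a = ξ) ∧
        ∏ j, v j = (a : ℂ) * ξ) := by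
  have ha0 : (a : ℂ) ≠ 0 := Nat.cast_ne_zero.mpr (by omega)
  have hpow : ∀ x : ℂ, x ^ (a - 1) * x = x ^ a := by
    intro x
    rw [← pow_succ]
    congr 1
    omega
  constructor
  · intro h
    by_cases hz : ∃ j, v j = 0
    · left
      obtain ⟨j, hj⟩ := hz
      funext i
      rcases eq_or_ne i j with rfl | hij
      · exact hj
      · have hi := h i
        have hprod : ∏ k ∈ Finset.univ.erase i, v k = 0 :=
          Finset.prod_eq_zero (Finset.mem_erase.mpr ⟨hij.symm, Finset.mem_univ j⟩) hj
        rw [hprod, mul_eq_zero] at hi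
        have : v i ^ (a - 1) = 0 := hi.resolve_left ha0
        exact pow_eq_zero_iff (by omega) |>.mp this
    · right
      push_neg at hz
      have key : ∀ j, (a : ℂ) * v j ^ a = ∏ k, v k := by
        intro j
        have hj := congrArg (· * v j) (h j)
        simp only [mul_assoc, hpow] at hj
        rw [Finset.prod_erase_mul _ _ (Finset.mem_univ j)] at hj
        exact hj
      set i0 : Fin n := ⟨0, by omega⟩
      set ξ : ℂ := v i0 ^ a with hξdef
      have hva : ∀ j, v j ^ a = ξ := by
        intro j
        have := (key j).trans (key i0).symm
        exact mul_left_cancel₀ ha0 this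
      have hP : ∏ j, v j = (a : ℂ) * ξ := (key i0).symm
      have hξ0 : ξ ≠ 0 := pow_ne_zero _ (hz i0)
      refine ⟨ξ, ?_, hva, hP⟩
      have h1 : ((a : ℂ) * ξ) ^ a = ξ ^ n := by
        rw [← hP, ← Finset.prod_pow]
        simp only [hva]
        rw [Finset.prod_const, Finset.card_univ, Fintype.card_fin]
      have h2 : (a : ℂ) ^ a * ξ ^ a = ξ ^ a * ξ ^ (n - a) := by
        rw [← mul_pow, h1, ← pow_add]
        congr 1
        omega
      have := h2.symm
      rw [mul_comm ((a : ℂ) ^ a) _] at this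
      exact mul_left_cancel₀ (pow_ne_zero _ hξ0) this
  · rintro (rfl | ⟨ξ, hξpow, hva, hP⟩)
    · intro j
      have : ∏ k ∈ Finset.univ.erase j, (0 : Fin n → ℂ) k = 0 := by
        apply Finset.prod_eq_zero (i := (Finset.univ.erase j).min' ?_)
        · exact (Finset.univ.erase j).min'_mem _
        · rfl
        · rw [← Finset.card_pos, Finset.card_erase_of_mem (Finset.mem_univ j),
            Finset.card_univ, Fintype.card_fin]
          omega
      rw [this]
      simp [pow_eq_zero_iff (show a - 1 ≠ 0 by omega)]
    · have hξ0 : ξ ≠ 0 := by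
        intro h0
        rw [h0, zero_pow (by omega)] at hξpow
        exact pow_ne_zero _ ha0 hξpow.symm
      have hv0 : ∀ j, v j ≠ 0 := by
        intro j h0
        apply hξ0
        rw [← hva j, h0, zero_pow (by omega)]
      intro j
      have := Finset.prod_erase_mul Finset.univ v (Finset.mem_univ j)
      rw [hP, ← hva j, ← hpow (v j), ← mul_assoc] at this
      exact (mul_right_cancel₀ (hv0 j) this).symm
end

section
/- Let n ≥ 4 and 2 ≤ a ≤ n−1 be integers. If v ∈ ℂⁿ is a nonzero point satisfying a·v_j^{a−1} = ∏_{k≠j} v_k for every j, then the critical value is Z^n_a(v) = (n−a)·v₁^a, and moreover ξ := v₁^a satisfies ξ^{n−a} = a^a and ξ ≠ 0. -/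
/-- For `n ≥ 4`, `2 ≤ a ≤ n−1`, if `v ∈ ℂⁿ` is a nonzero point satisfying
the critical-point equations `a·v_j^{a−1} = ∏_{k≠j} v_k` for every `j`, then the critical
value is `Z^n_a(v) = (n−a)·v₁^a`, and `ξ := v₁^a` satisfies `ξ^{n−a} = a^a` and `ξ ≠ 0`. -/
theorem critical_value_of_Zna (n a : ℕ) (hn : 4 ≤ n) (ha : 2 ≤ a) (han : a ≤ n - 1)
    (v : Fin n → ℂ) (hv0 : v ≠ 0)
    (hcrit : ∀ j, (a : ℂ) * v j ^ (a - 1) = ∏ k ∈ Finset.univ.erase j, v k) :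
    (-∏ j, v j + ∑ j, v j ^ a) = ((n : ℂ) - (a : ℂ)) * v ⟨0, by omega⟩ ^ a ∧
      (v ⟨0, by omega⟩ ^ a) ^ (n - a) = (a : ℂ) ^ a ∧
      v ⟨0, by omega⟩ ^ a ≠ 0 := by
  have haC : (a : ℂ) ≠ 0 := Nat.cast_ne_zero.mpr (by omega)
  set j0 : Fin n := ⟨0, by omega⟩
  set P : ℂ := ∏ j, v j with hP
  have key : ∀ j, (a : ℂ) * v j ^ a = P := by
    intro j
    have h : v j * ((a:ℂ) * v j ^ (a-1)) = v j * ∏ k ∈ Finset.univ.erase j, v k := by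
      rw [hcrit j]
    rw [Finset.mul_prod_erase _ _ (Finset.mem_univ j)] at h
    have hpow : v j * v j ^ (a-1) = v j ^ a := by
      rw [← pow_succ']
      congr 1; omega
    calc (a:ℂ) * v j ^ a = v j * ((a:ℂ) * v j ^ (a-1)) := by rw [← hpow]; ring
    _ = P := h
  have hPne : P ≠ 0 := by
    intro h0
    apply hv0
    funext j
    have := key j
    rw [h0, mul_eq_zero] at this
    have : v j ^ a = 0 := this.resolve_left haC
    simpa using pow_eq_zero_iff (by omega : a ≠ 0) |>.mp this
  set ξ : ℂ := v j0 ^ a with hξdef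
  have hξ : ∀ j, v j ^ a = ξ := by
    intro j
    have := (key j).trans (key j0).symm
    exact mul_left_cancel₀ haC this
  have hPξ : P = (a:ℂ) * ξ := (key j0).symm
  have hξne : ξ ≠ 0 := by
    intro h0
    exact hPne (by rw [hPξ, h0, mul_zero])
  have hsum : ∑ j, v j ^ a = (n : ℂ) * ξ := by
    rw [Finset.sum_congr rfl (fun j _ => hξ j), Finset.sum_const]
    simp [nsmul_eq_mul]
  refine ⟨?_, ?_, hξne⟩
  · rw [hsum, hPξ]; ring
  · have h1 : ξ ^ n = P ^ a := by
      calc ξ ^ n = ∏ _j : Fin n, ξ := by simp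
      _ = ∏ j, v j ^ a := Finset.prod_congr rfl (fun j _ => (hξ j).symm)
      _ = P ^ a := by rw [hP, Finset.prod_pow]
    have h2 : ξ ^ (n - a) * ξ ^ a = (a:ℂ) ^ a * ξ ^ a := by
      rw [← pow_add]
      have : n - a + a = n := by omega
      rw [this, h1, hPξ, mul_pow]
    exact mul_right_cancel₀ (pow_ne_zero a hξne) h2
end

section
/- Let n ≥ 4 and 2 ≤ a ≤ n−1 be integers. Suppose v, w ∈ ℂⁿ are both nonzero points satisfying a·v_j^{a−1} = ∏_{k≠j} v_k and a·w_j^{a−1} = ∏_{k≠j} w_k for every j, and suppose Z^n_a(v) = Z^n_a(w). Then there exists a unique ζ ∈ ℂⁿ with ζ_j^a = 1 for every j and ∏_j ζ_j = 1, such that w_j = ζ_j·v_j for every j. -/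
private lemma crit_coords_ne_zero (n a : ℕ) (ha : 2 ≤ a) (v : Fin n → ℂ) (hv0 : v ≠ 0)
    (hcv : ∀ j, (a : ℂ) * v j ^ (a - 1) = ∏ k ∈ Finset.univ.erase j, v k) :
    ∀ j, v j ≠ 0 := by
  intro j hj
  apply hv0
  have ha0 : (a : ℂ) ≠ 0 := Nat.cast_ne_zero.mpr (by omega)
  funext k
  by_cases hk : k = j
  · rw [hk]; exact hj
  · have h := hcv k
    have hjmem : j ∈ Finset.univ.erase k :=
      Finset.mem_erase.mpr ⟨Ne.symm hk, Finset.mem_univ j⟩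
    have h0 : (a : ℂ) * v k ^ (a - 1) = 0 := by
      rw [h]; exact Finset.prod_eq_zero hjmem hj
    have h1 := (mul_eq_zero.mp h0).resolve_left ha0
    exact (pow_eq_zero_iff (by omega : a - 1 ≠ 0)).mp h1

private lemma crit_key (n a : ℕ) (ha : 2 ≤ a) (v : Fin n → ℂ)
    (hcv : ∀ j, (a : ℂ) * v j ^ (a - 1) = ∏ k ∈ Finset.univ.erase j, v k) :
    ∀ j, (a : ℂ) * v j ^ a = ∏ k, v k := by
  intro j
  have h : (a : ℂ) * v j ^ (a - 1) * v j = (∏ k ∈ Finset.univ.erase j, v k) * v j :=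
    congrArg (· * v j) (hcv j)
  rw [mul_assoc, ← pow_succ, (by omega : a - 1 + 1 = a)] at h
  rw [h, Finset.prod_erase_mul _ _ (Finset.mem_univ j)]

/-- For `n ≥ 4`, `2 ≤ a ≤ n−1`, if `v, w ∈ ℂⁿ` are both nonzero critical
points of `Z^n_a` with the same critical value, then there is a unique `ζ ∈ ℂⁿ` with
`ζ_j^a = 1` for all `j` and `∏_j ζ_j = 1` such that `w_j = ζ_j·v_j` for all `j`. -/
theorem group_acts_freely_transitively_on_small_critical_points
    (n a : ℕ) (hn : 4 ≤ n) (ha : 2 ≤ a) (han : a ≤ n - 1)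
    (v w : Fin n → ℂ) (hv0 : v ≠ 0) (hw0 : w ≠ 0)
    (hcv : ∀ j, (a : ℂ) * v j ^ (a - 1) = ∏ k ∈ Finset.univ.erase j, v k)
    (hcw : ∀ j, (a : ℂ) * w j ^ (a - 1) = ∏ k ∈ Finset.univ.erase j, w k)
    (hZ : -∏ j, v j + ∑ j, v j ^ a = -∏ j, w j + ∑ j, w j ^ a) :
    ∃! ζ : Fin n → ℂ, (∀ j, ζ j ^ a = 1) ∧ (∏ j, ζ j = 1) ∧ ∀ j, w j = ζ j * v j := by
  have ha0 : (a : ℂ) ≠ 0 := Nat.cast_ne_zero.mpr (by omega)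
  have hv := crit_coords_ne_zero n a ha v hv0 hcv
  have hw := crit_coords_ne_zero n a ha w hw0 hcw
  have keyv := crit_key n a ha v hcv
  have keyw := crit_key n a ha w hcw
  have hsumv : (a : ℂ) * ∑ j, v j ^ a = n * ∏ k, v k := by
    rw [Finset.mul_sum, Finset.sum_congr rfl (fun j _ => keyv j), Finset.sum_const]
    simp [Finset.card_univ, mul_comm]
  have hsumw : (a : ℂ) * ∑ j, w j ^ a = n * ∏ k, w k := by
    rw [Finset.mul_sum, Finset.sum_congr rfl (fun j _ => keyw j), Finset.sum_const]
    simp [Finset.card_univ, mul_comm]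
  have hna : ((n : ℂ) - a) ≠ 0 := by
    have h1 : a < n := by omega
    exact sub_ne_zero.mpr (by exact_mod_cast h1.ne')
  have hPQ : ∏ k, v k = ∏ k, w k := by
    apply mul_left_cancel₀ hna
    linear_combination (a : ℂ) * hZ - hsumv + hsumw
  have hvP : (∏ k, v k) ≠ 0 := Finset.prod_ne_zero_iff.mpr (fun j _ => hv j)
  have hpow : ∀ j, w j ^ a = v j ^ a := by
    intro j
    apply mul_left_cancel₀ ha0
    rw [keyv j, keyw j, hPQ]
  refine ⟨fun j => w j / v j, ⟨?_, ?_, ?_⟩, ?_⟩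
  · intro j
    rw [div_pow, hpow j, div_self (pow_ne_zero _ (hv j))]
  · rw [Finset.prod_div_distrib, ← hPQ, div_self hvP]
  · intro j
    rw [div_mul_cancel₀ _ (hv j)]
  · rintro ζ ⟨-, -, h3⟩
    funext j
    rw [eq_div_iff (hv j)]
    exact (h3 j).symm
end

section
/- Let n ≥ 4 and 2 ≤ a ≤ n−1 be integers, and let v ∈ ℂⁿ be a nonzero point satisfying a·v_j^{a−1} = ∏_{k≠j} v_k for every j. Then the n×n complex matrix H defined by H_{jj} = a(a−1)·v_j^{a−2} and, for i ≠ j, H_{ij} = −∏_{k∉{i,j}} v_k, has nonzero determinant. -/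
/-- For `n ≥ 4`, `2 ≤ a ≤ n−1`, if `v ∈ ℂⁿ` is a nonzero critical point of
`Z^n_a`, then the Hessian matrix `H` with `H_{jj} = a(a−1)·v_j^{a−2}` and
`H_{ij} = −∏_{k∉{i,j}} v_k` for `i ≠ j` has nonzero determinant. -/
theorem hessian_nondegenerate_at_small_critical_points
    (n a : ℕ) (hn : 4 ≤ n) (ha : 2 ≤ a) (han : a ≤ n - 1)
    (v : Fin n → ℂ) (hv0 : v ≠ 0)
    (hcrit : ∀ j, (a : ℂ) * v j ^ (a - 1) = ∏ k ∈ Finset.univ.erase j, v k) :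
    (Matrix.of fun i j : Fin n =>
        if i = j then (a : ℂ) * ((a : ℂ) - 1) * v j ^ (a - 2)
        else -∏ k ∈ Finset.univ \ {i, j}, v k).det ≠ 0 := by
  have ha0 : (a : ℂ) ≠ 0 := Nat.cast_ne_zero.mpr (by omega)
  -- all coordinates are nonzero
  have hne : ∀ j, v j ≠ 0 := by
    by_contra h
    push_neg at h
    obtain ⟨j, hj⟩ := h
    apply hv0
    funext i
    rcases eq_or_ne i j with rfl | hij
    · exact hj
    · have hc := hcrit i
      have hz : (∏ k ∈ Finset.univ.erase i, v k) = 0 :=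
        Finset.prod_eq_zero (Finset.mem_erase.mpr ⟨Ne.symm hij, Finset.mem_univ j⟩) hj
      rw [hz, mul_eq_zero] at hc
      rcases hc with h1 | h1
      · exact (ha0 h1).elim
      · exact pow_eq_zero_iff (by omega : a - 1 ≠ 0) |>.mp h1
  set P : ℂ := ∏ k, v k with hPdef
  have hPne : P ≠ 0 := Finset.prod_ne_zero_iff.mpr fun i _ => hne i
  have hP : ∀ j, P = (a : ℂ) * v j ^ a := by
    intro j
    rw [hPdef, ← Finset.mul_prod_erase Finset.univ v (Finset.mem_univ j), ← hcrit j]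
    rw [← mul_assoc, mul_comm (v j) (a : ℂ), mul_assoc, ← pow_succ']
    congr 2
    omega
  set A : Matrix (Fin n) (Fin n) ℂ :=
    Matrix.of fun i j => if i = j then (a : ℂ) - 1 else (-1 : ℂ) with hAdef
  have hfact : (Matrix.of fun i j : Fin n =>
        if i = j then (a : ℂ) * ((a : ℂ) - 1) * v j ^ (a - 2)
        else -∏ k ∈ Finset.univ \ {i, j}, v k) =
      Matrix.diagonal (fun i => (v i)⁻¹) * (P • A) * Matrix.diagonal (fun i => (v i)⁻¹) := by
    ext i j
    rw [Matrix.mul_diagonal, Matrix.diagonal_mul]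
    simp only [Matrix.smul_apply, Matrix.of_apply, smul_eq_mul, hAdef]
    split_ifs with h
    · subst h
      have hpow : v i ^ a = v i ^ (a - 2) * v i * v i := by
        rw [← pow_succ, ← pow_succ]
        congr 1
        omega
      rw [hP i, hpow]
      field_simp [hne i]
    · have hsplit : (∏ k ∈ Finset.univ \ {i, j}, v k) * (v i * v j) = P := by
        rw [← Finset.prod_pair h, Finset.prod_sdiff (Finset.subset_univ _)]
      rw [← hsplit]
      field_simp [hne i, hne j]
  have hA : A = (a : ℂ) •
      (1 + Matrix.replicateCol Unit (fun _ => -(a : ℂ)⁻¹) * Matrix.replicateRow Unit (fun _ => (1 : ℂ))) := by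
    ext i j
    simp only [hAdef, Matrix.of_apply, Matrix.smul_apply, Matrix.add_apply, Matrix.one_apply,
      Matrix.mul_apply, Matrix.replicateCol_apply, Matrix.replicateRow_apply, Finset.univ_unique,
      Finset.sum_const, Finset.card_singleton, one_smul, smul_eq_mul, mul_one]
    split_ifs with h
    · field_simp
      ring
    · field_simp
      ring
  have hanC : (a : ℂ) ≠ (n : ℂ) := by
    intro h
    have := Nat.cast_injective h
    omega
  have hdetA : A.det ≠ 0 := by
    rw [hA, Matrix.det_smul, Matrix.det_one_add_replicateCol_mul_replicateRow]
    apply mul_ne_zero (pow_ne_zero _ ha0)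
    simp only [dotProduct, Finset.sum_const, Finset.card_univ, Fintype.card_fin,
      nsmul_eq_mul, one_mul, mul_neg, mul_one]
    intro h
    apply hanC
    field_simp at h
    linear_combination h
  rw [hfact, Matrix.det_mul, Matrix.det_mul, Matrix.det_diagonal, Matrix.det_smul]
  refine mul_ne_zero (mul_ne_zero ?_ (mul_ne_zero (pow_ne_zero _ hPne) hdetA)) ?_ <;>
    exact Finset.prod_ne_zero_iff.mpr fun i _ => inv_ne_zero (hne i)
end

section
/- Let n ≥ 4 and 2 ≤ a ≤ n−1 be integers. In the polynomial ring S = ℂ[r₁,…,rₙ,u₁,…,uₙ], the n elements g̃_j := a·r_j·u_j^{a−1} − ∏_{k≠j} u_k (for j = 1,…,n) form a regular sequence. -/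
open MvPolynomial

/-- The element `g̃_j = a·r_j·u_j^{a−1} − ∏_{k≠j} u_k` of `S = ℂ[r₁,…,rₙ,u₁,…,uₙ]`,
where `r_j` is the variable `X (Sum.inl j)` and `u_j` is the variable `X (Sum.inr j)`.
Up to sign, this is the partial derivative `∂Z̃^n_a/∂u_j` of
`Z̃^n_a = −u₁⋯uₙ + Σ_j r_j·u_j^a`. -/
noncomputable def gTilde (n a : ℕ) (j : Fin n) : MvPolynomial (Fin n ⊕ Fin n) ℂ :=
  (a : MvPolynomial (Fin n ⊕ Fin n) ℂ) * X (Sum.inl j) * X (Sum.inr j) ^ (a - 1)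
    - ∏ k ∈ Finset.univ.erase j, X (Sum.inr k)

set_option linter.unusedSectionVars false

section Aux

namespace GTilde

open scoped MonomialOrder
section Deg

variable {σ : Type*} {K : Type*} [Field K] [DecidableEq σ] [DecidableEq K] (m : MonomialOrder σ)

/-- Leading exponent (degree) of a multivariate polynomial w.r.t. a monomial order. -/
noncomputable def mdeg (f : MvPolynomial σ K) : σ →₀ ℕ :=
  m.toSyn.symm (f.support.sup m.toSyn)

/-- Leading coefficient w.r.t. a monomial order. -/
noncomputable def mlc (f : MvPolynomial σ K) : K := coeff (mdeg m f) f

variable {m}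

lemma toSyn_mdeg (f : MvPolynomial σ K) :
    m.toSyn (mdeg m f) = f.support.sup m.toSyn := by
  simp [mdeg]

lemma mdeg_zero : mdeg m (0 : MvPolynomial σ K) = 0 := by
  simp [mdeg]

lemma le_toSyn_mdeg {f : MvPolynomial σ K} {e : σ →₀ ℕ} (he : e ∈ f.support) :
    m.toSyn e ≤ m.toSyn (mdeg m f) := by
  rw [toSyn_mdeg]; exact Finset.le_sup he

lemma coeff_eq_zero_of_gt {f : MvPolynomial σ K} {e : σ →₀ ℕ}
    (h : m.toSyn (mdeg m f) < m.toSyn e) : coeff e f = 0 := by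
  by_contra hc
  exact absurd (le_toSyn_mdeg (by simpa [mem_support_iff] using hc)) (not_le.mpr h)

lemma mdeg_mem_support {f : MvPolynomial σ K} (hf : f ≠ 0) : mdeg m f ∈ f.support := by
  obtain ⟨e, he, hs⟩ := f.support.exists_mem_eq_sup (by simpa using hf) m.toSyn
  have : mdeg m f = e := by
    rw [mdeg, hs, AddEquiv.symm_apply_apply]
  rwa [this]

lemma mlc_ne_zero {f : MvPolynomial σ K} (hf : f ≠ 0) : mlc m f ≠ 0 := by
  simpa [mlc, mem_support_iff] using mdeg_mem_support (m := m) hf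

lemma mdeg_monomial {d : σ →₀ ℕ} {c : K} (hc : c ≠ 0) :
    mdeg m (monomial d c) = d := by
  rw [mdeg, support_monomial, if_neg hc, Finset.sup_singleton, AddEquiv.symm_apply_apply]

lemma mlc_monomial {d : σ →₀ ℕ} {c : K} (hc : c ≠ 0) :
    mlc m (monomial d c) = c := by
  rw [mlc, mdeg_monomial hc, coeff_monomial, if_pos rfl]

lemma coeff_mul_of_gt {f g : MvPolynomial σ K} {e : σ →₀ ℕ}
    (h : m.toSyn (mdeg m f) + m.toSyn (mdeg m g) < m.toSyn e) : coeff e (f * g) = 0 := by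
  classical
  rw [coeff_mul]
  apply Finset.sum_eq_zero
  rintro ⟨x, y⟩ hxy
  rw [Finset.HasAntidiagonal.mem_antidiagonal] at hxy
  by_contra hc
  have hx : coeff x f ≠ 0 := fun h0 => hc (by simp [h0])
  have hy : coeff y g ≠ 0 := fun h0 => hc (by simp [h0])
  have h1 : m.toSyn x ≤ m.toSyn (mdeg m f) := le_toSyn_mdeg (by simpa [mem_support_iff])
  have h2 : m.toSyn y ≤ m.toSyn (mdeg m g) := le_toSyn_mdeg (by simpa [mem_support_iff])
  have : m.toSyn e ≤ m.toSyn (mdeg m f) + m.toSyn (mdeg m g) := by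
    rw [← hxy, map_add]; exact add_le_add h1 h2
  exact absurd this (not_le.mpr h)

lemma coeff_mul_mdeg_add_mdeg (f g : MvPolynomial σ K) :
    coeff (mdeg m f + mdeg m g) (f * g) = mlc m f * mlc m g := by
  classical
  rcases eq_or_ne f 0 with rfl | hf
  · simp [mlc]
  rcases eq_or_ne g 0 with rfl | hg
  · simp [mlc]
  rw [coeff_mul]
  rw [Finset.sum_eq_single_of_mem (mdeg m f, mdeg m g) (by rw [Finset.HasAntidiagonal.mem_antidiagonal])]
  · rfl
  rintro ⟨x, y⟩ hxy hne
  rw [Finset.HasAntidiagonal.mem_antidiagonal] at hxy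
  by_contra hc
  have hx : coeff x f ≠ 0 := fun h0 => hc (by simp [h0])
  have hy : coeff y g ≠ 0 := fun h0 => hc (by simp [h0])
  have h1 : m.toSyn x ≤ m.toSyn (mdeg m f) := le_toSyn_mdeg (by simpa [mem_support_iff])
  have h2 : m.toSyn y ≤ m.toSyn (mdeg m g) := le_toSyn_mdeg (by simpa [mem_support_iff])
  have hsum : m.toSyn x + m.toSyn y = m.toSyn (mdeg m f) + m.toSyn (mdeg m g) := by
    rw [← map_add, ← map_add, hxy]
  have hx' : m.toSyn x = m.toSyn (mdeg m f) := by
    by_contra hne'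
    have hlt : m.toSyn x < m.toSyn (mdeg m f) := lt_of_le_of_ne h1 hne'
    have : m.toSyn (mdeg m f) + m.toSyn (mdeg m g) < m.toSyn (mdeg m f) + m.toSyn (mdeg m g) := by
      conv_lhs => rw [← hsum]
      exact add_lt_add_of_lt_of_le hlt h2
    exact lt_irrefl _ this
  have hxe : x = mdeg m f := m.toSyn.injective hx'
  have hye : y = mdeg m g := by
    have := hxy
    rw [hxe] at this
    exact add_left_cancel this
  exact hne (by rw [hxe, hye])

lemma mdeg_mul {f g : MvPolynomial σ K} (hf : f ≠ 0) (hg : g ≠ 0) :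
    mdeg m (f * g) = mdeg m f + mdeg m g := by
  have hne : coeff (mdeg m f + mdeg m g) (f * g) ≠ 0 := by
    rw [coeff_mul_mdeg_add_mdeg]
    exact mul_ne_zero (mlc_ne_zero hf) (mlc_ne_zero hg)
  have h1 : m.toSyn (mdeg m f + mdeg m g) ≤ m.toSyn (mdeg m (f * g)) :=
    le_toSyn_mdeg (by simpa [mem_support_iff])
  have h2 : m.toSyn (mdeg m (f * g)) ≤ m.toSyn (mdeg m f + mdeg m g) := by
    by_contra hlt
    have := coeff_mul_of_gt (m := m) (f := f) (g := g) (e := mdeg m (f * g))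
      (by rw [← map_add]; exact not_le.mp hlt)
    have h3 : f * g ≠ 0 := mul_ne_zero hf hg
    exact (mem_support_iff.mp (mdeg_mem_support h3)) this
  exact m.toSyn.injective (le_antisymm h2 h1)

lemma mlc_mul {f g : MvPolynomial σ K} (hf : f ≠ 0) (hg : g ≠ 0) :
    mlc m (f * g) = mlc m f * mlc m g := by
  rw [mlc, mdeg_mul hf hg, coeff_mul_mdeg_add_mdeg]

/-- Cancellation: if `p` and `q` have the same leading exponent and coefficient,
every exponent of `p - q` is strictly smaller. -/
lemma toSyn_lt_of_mem_support_sub {p q : MvPolynomial σ K}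
    (hd : mdeg m p = mdeg m q) (hc : mlc m p = mlc m q) {e : σ →₀ ℕ}
    (he : e ∈ (p - q).support) : m.toSyn e < m.toSyn (mdeg m p) := by
  rw [mem_support_iff, coeff_sub, sub_ne_zero] at he
  rcases lt_trichotomy (m.toSyn e) (m.toSyn (mdeg m p)) with h | h | h
  · exact h
  · exfalso
    have : e = mdeg m p := m.toSyn.injective h
    apply he
    rw [this, ← mlc, hc, mlc, hd]
  · exfalso
    apply he
    rw [coeff_eq_zero_of_gt h, coeff_eq_zero_of_gt (hd ▸ h)]

lemma toSyn_mdeg_sub_lt {p q : MvPolynomial σ K}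
    (hd : mdeg m p = mdeg m q) (hc : mlc m p = mlc m q) (hne : p - q ≠ 0) :
    m.toSyn (mdeg m (p - q)) < m.toSyn (mdeg m p) :=
  toSyn_lt_of_mem_support_sub hd hc (mdeg_mem_support hne)

/-- If every exponent of `q` is `< mdeg p` then `p - q` keeps degree and leading coeff. -/
lemma mdeg_sub_of_lt {p q : MvPolynomial σ K} (hp : p ≠ 0)
    (hq : ∀ e ∈ q.support, m.toSyn e < m.toSyn (mdeg m p)) :
    mdeg m (p - q) = mdeg m p ∧ mlc m (p - q) = mlc m p := by
  have hco : coeff (mdeg m p) (p - q) = mlc m p := by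
    rw [coeff_sub, ← mlc]
    have : coeff (mdeg m p) q = 0 := by
      by_contra hc
      exact lt_irrefl _ (hq _ (by simpa [mem_support_iff] using hc))
    rw [this, sub_zero]
  have hsupp : ∀ e ∈ (p - q).support, m.toSyn e ≤ m.toSyn (mdeg m p) := by
    intro e he
    rw [mem_support_iff, coeff_sub, sub_ne_zero] at he
    by_contra hgt
    apply he
    rw [coeff_eq_zero_of_gt (not_le.mp hgt)]
    by_contra hq0
    exact absurd (hq _ (by simpa [mem_support_iff] using (Ne.symm hq0))) (by
      exact not_lt.mpr (le_of_lt (not_le.mp hgt)))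
  have hne : p - q ≠ 0 := by
    intro h0
    have := hco
    rw [h0] at this
    exact mlc_ne_zero hp (by simpa using this.symm)
  have hdeq : mdeg m (p - q) = mdeg m p := by
    apply m.toSyn.injective
    apply le_antisymm (hsupp _ (mdeg_mem_support hne))
    exact le_toSyn_mdeg (by simpa [mem_support_iff, hco] using mlc_ne_zero hp)
  exact ⟨hdeq, by rw [mlc, hdeq, hco]⟩

end Deg

section Order

variable {n : ℕ}

/-- The lexicographic monomial order on `Fin n ⊕ Fin n` with the `r`-variables
(`Sum.inl`) most significant. -/
noncomputable def mo (n : ℕ) : MonomialOrder (Fin n ⊕ Fin n) where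
  syn := Lex (Fin (n + n) →₀ ℕ)
  toSyn :=
    (Finsupp.domCongr (M := ℕ) finSumFinEquiv).trans
      { toEquiv := toLex, map_add' := toLex_add }
  toSyn_monotone := by
    intro x y hxy
    apply Finsupp.toLex_monotone
    intro i
    exact hxy (finSumFinEquiv.symm i)

/-- Comparison criterion in `mo n`. -/
lemma mo_lt_iff {x y : (Fin n ⊕ Fin n) →₀ ℕ} :
    (x ≺[mo n] y) ↔ toLex ((Finsupp.domCongr (M := ℕ) finSumFinEquiv) x)
      < toLex ((Finsupp.domCongr (M := ℕ) finSumFinEquiv) y) := Iff.rfl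

lemma mo_lt_of_exists {x y : (Fin n ⊕ Fin n) →₀ ℕ} (i : Fin (n + n))
    (h1 : ∀ j < i, x (finSumFinEquiv.symm j) = y (finSumFinEquiv.symm j))
    (h2 : x (finSumFinEquiv.symm i) < y (finSumFinEquiv.symm i)) :
    x ≺[mo n] y := by
  rw [mo_lt_iff, Finsupp.Lex.lt_iff]
  refine ⟨i, fun j hj => ?_, ?_⟩
  · simpa [Finsupp.domCongr_apply] using h1 j hj
  · simpa [Finsupp.domCongr_apply] using h2

end Order

section Gdef

variable {n a : ℕ}

/-- Leading exponent of `gTilde`: `r_j u_j^(a-1)`. -/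
noncomputable def mU (n a : ℕ) (j : Fin n) : (Fin n ⊕ Fin n) →₀ ℕ :=
  Finsupp.single (Sum.inl j) 1 + Finsupp.single (Sum.inr j) (a - 1)

/-- Trailing exponent of `gTilde`: `∏_{k ≠ j} u_k`. -/
noncomputable def mV (n : ℕ) (j : Fin n) : (Fin n ⊕ Fin n) →₀ ℕ :=
  ∑ k ∈ Finset.univ.erase j, Finsupp.single (Sum.inr k) 1

lemma mU_apply_inl (j k : Fin n) : mU n a j (Sum.inl k) = if j = k then 1 else 0 := by
  simp [mU, Finsupp.single_apply]

lemma mU_apply_inr (j k : Fin n) : mU n a j (Sum.inr k) = if j = k then a - 1 else 0 := by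
  simp only [mU, Finsupp.add_apply, Finsupp.single_apply]
  by_cases h : j = k <;> simp [h]

lemma mV_apply_inl (j k : Fin n) : mV n j (Sum.inl k) = 0 := by
  simp [mV, Finsupp.single_apply]

lemma mV_apply_inr (j k : Fin n) : mV n j (Sum.inr k) = if k = j then 0 else 1 := by
  rw [mV, Finsupp.finset_sum_apply]
  by_cases h : k = j
  · subst h
    rw [if_pos rfl]
    apply Finset.sum_eq_zero
    intro i hi
    rw [Finsupp.single_apply, if_neg]
    intro hik
    rw [Sum.inr.injEq] at hik
    exact (Finset.mem_erase.mp hi).1 hik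
  · rw [if_neg h]
    rw [Finset.sum_eq_single_of_mem k (by simp [Finset.mem_erase, h])]
    · simp
    · intro i hi hik
      rw [Finsupp.single_apply, if_neg (by simpa [Sum.inr.injEq] using hik)]

/-- `gTilde` as a difference of two monomials. -/
lemma gTilde_eq (j : Fin n) :
    gTilde n a j = monomial (mU n a j) (a : ℂ) - monomial (mV n j) 1 := by
  rw [gTilde]
  congr 1
  · rw [show ((a : MvPolynomial (Fin n ⊕ Fin n) ℂ)) = C (a : ℂ) from (map_natCast C a).symm,
      X_pow_eq_monomial, X, mU, C_apply, monomial_mul, monomial_mul]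
    simp
  · rw [mV]
    induction (Finset.univ.erase j) using Finset.induction with
    | empty => simp
    | insert _ _ hx ih =>
      rw [Finset.prod_insert hx, Finset.sum_insert hx, ih, X, monomial_mul, one_mul]

lemma mU_ne_mV (j : Fin n) : mU n a j ≠ mV n j := by
  intro h
  have := congrArg (fun f => f (Sum.inl j)) h
  simp [mU_apply_inl, mV_apply_inl] at this

lemma mV_lt_mU (j : Fin n) : mV n j ≺[mo n] mU n a j := by
  apply mo_lt_of_exists (Fin.castAdd n j)
  · intro i hi
    have hi' : (i : ℕ) < j := hi
    have hin : (i : ℕ) < n := lt_trans hi' j.isLt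
    have hi2 : i = Fin.castAdd n ⟨i, hin⟩ := Fin.ext (by simp)
    rw [hi2, finSumFinEquiv_symm_apply_castAdd, mU_apply_inl, mV_apply_inl, if_neg]
    intro h
    exact absurd (congrArg Fin.val h) (by simp; omega)
  · rw [finSumFinEquiv_symm_apply_castAdd, mU_apply_inl, mV_apply_inl, if_pos rfl]
    norm_num

variable (ha : 2 ≤ a)
include ha

lemma aC_ne_zero : (a : ℂ) ≠ 0 := by
  exact_mod_cast (by omega : a ≠ 0)

lemma mdeg_gTilde (j : Fin n) : mdeg (mo n) (gTilde n a j) = mU n a j := by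
  rw [gTilde_eq]
  have := mdeg_sub_of_lt (m := mo n) (p := monomial (mU n a j) (a : ℂ))
    (q := monomial (mV n j) (1:ℂ)) (by
      simp only [ne_eq, monomial_eq_zero]
      exact aC_ne_zero ha)
    (by
      intro e he
      rw [support_monomial, if_neg one_ne_zero] at he
      rw [Finset.mem_singleton] at he
      subst he
      rw [mdeg_monomial (aC_ne_zero ha)]
      exact mV_lt_mU j)
  rw [this.1, mdeg_monomial (aC_ne_zero ha)]

lemma mlc_gTilde (j : Fin n) : mlc (mo n) (gTilde n a j) = (a : ℂ) := by
  rw [gTilde_eq]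
  have := mdeg_sub_of_lt (m := mo n) (p := monomial (mU n a j) (a : ℂ))
    (q := monomial (mV n j) (1:ℂ)) (by
      simp only [ne_eq, monomial_eq_zero]
      exact aC_ne_zero ha)
    (by
      intro e he
      rw [support_monomial, if_neg one_ne_zero] at he
      rw [Finset.mem_singleton] at he
      subst he
      rw [mdeg_monomial (aC_ne_zero ha)]
      exact mV_lt_mU j)
  rw [this.2, mlc_monomial (aC_ne_zero ha)]

lemma gTilde_ne_zero (j : Fin n) : gTilde n a j ≠ 0 := by
  intro h
  have := mlc_gTilde (n := n) ha j
  rw [h] at this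
  simp [mlc] at this
  exact aC_ne_zero ha this.symm

/-- Coprimality of leading exponents: if `mU i ≤ d + mU j` with `i ≠ j` then `mU i ≤ d`. -/
lemma mU_le_of_le_add {i j : Fin n} (hij : i ≠ j) {d : (Fin n ⊕ Fin n) →₀ ℕ}
    (h : mU n a i ≤ d + mU n a j) : mU n a i ≤ d := by
  rw [Finsupp.le_def] at h ⊢
  intro x
  have hx := h x
  rcases x with k | k
  · rw [mU_apply_inl] at hx ⊢
    by_cases hik : i = k
    · subst hik
      rw [if_pos rfl] at hx ⊢
      rwa [Finsupp.add_apply, mU_apply_inl, if_neg (fun h => hij h.symm),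
        add_zero] at hx
    · simp [if_neg hik]
  · rw [mU_apply_inr] at hx ⊢
    by_cases hik : i = k
    · subst hik
      rw [if_pos rfl] at hx ⊢
      rwa [Finsupp.add_apply, mU_apply_inr, if_neg (fun h => hij h.symm),
        add_zero] at hx
    · simp [if_neg hik]

end Gdef

section LemA

variable {n a : ℕ}

local notation "PS" => MvPolynomial (Fin n ⊕ Fin n) ℂ

lemma mdeg_term (ha : 2 ≤ a) {q : PS} (hq : q ≠ 0) (i : Fin n) :
    mdeg (mo n) (q * gTilde n a i) = mdeg (mo n) q + mU n a i := by
  rw [mdeg_mul hq (gTilde_ne_zero ha i), mdeg_gTilde ha]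

lemma mlc_term (ha : 2 ≤ a) {q : PS} (hq : q ≠ 0) (i : Fin n) :
    mlc (mo n) (q * gTilde n a i) = mlc (mo n) q * (a : ℂ) := by
  rw [mlc_mul hq (gTilde_ne_zero ha i), mlc_gTilde ha]

/-- Key lemma (Gröbner basis property): if a nonzero `f` is a combination of the `gTilde`'s
indexed by `F`, then its leading exponent is divisible by some `mU i`, `i ∈ F`. -/
lemma lemA (ha : 2 ≤ a) :
    ∀ (w : (mo n).syn) (q : Fin n → PS),
      (∑ i, (mo n).toSyn (mdeg (mo n) (q i * gTilde n a i))) = w →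
      ∀ F : Finset (Fin n), (∀ i ∉ F, q i = 0) →
      (∑ i, q i * gTilde n a i) ≠ 0 →
      ∃ i ∈ F, mU n a i ≤ mdeg (mo n) (∑ i, q i * gTilde n a i) := by
  intro w
  induction w using WellFoundedLT.induction with
  | _ wc IH =>
  intro q hw F hq0 hf
  set m := mo n
  set g := gTilde n a with hg
  set f := ∑ i, q i * g i with hfdef
  have hnem : Nonempty (Fin n) := by
    by_contra hc
    have : IsEmpty (Fin n) := not_nonempty_iff.mp hc
    exact hf (by rw [hfdef, Finset.univ_eq_empty, Finset.sum_empty])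
  set B := Finset.univ.sup (fun i => m.toSyn (mdeg m (q i * g i))) with hBdef
  have h_le_B : ∀ i, m.toSyn (mdeg m (q i * g i)) ≤ B := fun i =>
    Finset.le_sup (f := fun i => m.toSyn (mdeg m (q i * g i))) (Finset.mem_univ i)
  have hfB : ∀ e, B < m.toSyn e → coeff e f = 0 := by
    intro e he
    rw [hfdef, coeff_sum]
    exact Finset.sum_eq_zero fun i _ =>
      coeff_eq_zero_of_gt (lt_of_le_of_lt (h_le_B i) he)
  have hdfB : m.toSyn (mdeg m f) ≤ B := by
    by_contra hgt
    exact mem_support_iff.mp (mdeg_mem_support hf) (hfB _ (not_le.mp hgt))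
  rcases eq_or_lt_of_le hdfB with heq | hlt
  · -- the leading exponent of f is realized by some term
    have h1 : coeff (mdeg m f) f ≠ 0 := mem_support_iff.mp (mdeg_mem_support hf)
    have h1' := h1
    rw [hfdef, coeff_sum] at h1'
    obtain ⟨i, _, hi⟩ := Finset.exists_ne_zero_of_sum_ne_zero h1'
    have hqi : q i ≠ 0 := by
      intro h0
      rw [h0, zero_mul, coeff_zero] at hi
      exact hi rfl
    have h2 : m.toSyn (mdeg m f) ≤ m.toSyn (mdeg m (q i * g i)) :=
      le_toSyn_mdeg (mem_support_iff.mpr hi)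
    have h3 : mdeg m (q i * g i) = mdeg m f :=
      m.toSyn.injective (le_antisymm (le_trans (h_le_B i) (le_of_eq heq.symm)) h2)
    refine ⟨i, by by_contra hiF; exact hqi (hq0 i hiF), ?_⟩
    rw [← h3, mdeg_term ha hqi]
    exact self_le_add_left _ _
  · -- cancellation at the top: rewrite using the Koszul syzygy and recurse
    set δ := m.toSyn.symm B with hδdef
    have hδ : m.toSyn δ = B := m.toSyn.apply_symm_apply B
    obtain ⟨i₀, -, hB⟩ := Finset.exists_mem_eq_sup Finset.univ Finset.univ_nonempty
      (fun i => m.toSyn (mdeg m (q i * g i)))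
    rw [← hBdef] at hB
    have hBpos : (0 : m.syn) < B := lt_of_le_of_lt (m.bot_eq_zero ▸ bot_le) hlt
    have hqi₀ : q i₀ ≠ 0 := by
      intro h0
      rw [h0, zero_mul, mdeg_zero, map_zero] at hB
      exact lt_irrefl _ (hB ▸ hBpos)
    set T := Finset.univ.filter
      (fun i => m.toSyn (mdeg m (q i * g i)) = B ∧ q i ≠ 0) with hTdef
    have hi₀T : i₀ ∈ T := by
      rw [hTdef, Finset.mem_filter]
      exact ⟨Finset.mem_univ _, hB.symm, hqi₀⟩
    have hmemT : ∀ i ∈ T, δ = mdeg m (q i * g i) ∧ q i ≠ 0 := by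
      intro i hi
      rw [hTdef, Finset.mem_filter] at hi
      exact ⟨m.toSyn.injective (by rw [hδ, hi.2.1]), hi.2.2⟩
    have hcT : ∀ i ∈ T, coeff δ (q i * g i) = mlc m (q i) * (a : ℂ) := by
      intro i hi
      rw [(hmemT i hi).1, ← mlc, mlc_term ha (hmemT i hi).2]
    have hc0 : ∑ i ∈ T, coeff δ (q i * g i) = 0 := by
      have h0 : coeff δ f = 0 := coeff_eq_zero_of_gt (by rw [hδ]; exact hlt)
      rw [hfdef, coeff_sum] at h0
      rw [← h0]
      apply Finset.sum_subset (Finset.subset_univ T)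
      intro i _ hiT
      rcases eq_or_ne (q i) 0 with h0' | h0'
      · rw [h0', zero_mul, coeff_zero]
      · apply coeff_eq_zero_of_gt
        rw [hδ]
        refine lt_of_le_of_ne (h_le_B i) (fun hEq => hiT ?_)
        rw [hTdef, Finset.mem_filter]
        exact ⟨Finset.mem_univ _, hEq, h0'⟩
    obtain ⟨l, hlT, hli⟩ : ∃ l ∈ T, l ≠ i₀ := by
      by_contra hno
      push_neg at hno
      have hT1 : T = {i₀} := Finset.eq_singleton_iff_unique_mem.mpr ⟨hi₀T, hno⟩
      rw [hT1, Finset.sum_singleton, hcT i₀ hi₀T] at hc0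
      exact mul_ne_zero (mlc_ne_zero hqi₀) (aC_ne_zero ha) hc0
    have hql : q l ≠ 0 := (hmemT l hlT).2
    have hδi : δ = mdeg m (q i₀) + mU n a i₀ := by
      rw [(hmemT i₀ hi₀T).1, mdeg_term ha hqi₀]
    have hδl : δ = mdeg m (q l) + mU n a l := by
      rw [(hmemT l hlT).1, mdeg_term ha hql]
    have hμl : mU n a l ≤ mdeg m (q i₀) := by
      apply mU_le_of_le_add ha hli
      rw [← hδi, hδl]
      exact self_le_add_left _ _
    set t : PS := monomial (mdeg m (q i₀) - mU n a l) (mlc m (q i₀) / (a : ℂ)) with htdef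
    have htc : mlc m (q i₀) / (a : ℂ) ≠ 0 :=
      div_ne_zero (mlc_ne_zero hqi₀) (aC_ne_zero ha)
    have ht0 : t ≠ 0 := by
      rw [htdef]
      simpa using htc
    have htl : mdeg m (t * g l) = mdeg m (q i₀) := by
      rw [mdeg_term ha ht0, htdef, mdeg_monomial htc, tsub_add_cancel_of_le hμl]
    have htlc : mlc m (t * g l) = mlc m (q i₀) := by
      rw [mlc_term ha ht0, htdef, mlc_monomial htc, div_mul_cancel₀ _ (aC_ne_zero ha)]
    have hti : mdeg m (t * g i₀) = mdeg m (q l) := by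
      rw [mdeg_term ha ht0, htdef, mdeg_monomial htc]
      have hcan : (mdeg m (q i₀) - mU n a l + mU n a i₀) + mU n a l
          = mdeg m (q l) + mU n a l := by
        rw [add_right_comm, tsub_add_cancel_of_le hμl, ← hδi, hδl]
      exact add_right_cancel hcan
    set q' : Fin n → PS := fun k =>
      if k = i₀ then q i₀ - t * g l else if k = l then q l + t * g i₀ else q k with hq'def
    have hq'i₀ : q' i₀ = q i₀ - t * g l := by rw [hq'def]; simp
    have hq'l : q' l = q l + t * g i₀ := by
      rw [hq'def]
      simp [hli]
    have hq'other : ∀ k, k ≠ i₀ → k ≠ l → q' k = q k := by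
      intro k h1 h2
      rw [hq'def]
      simp [h1, h2]
    have hq'f : ∑ k, q' k * g k = f := by
      rw [hfdef, ← sub_eq_zero, ← Finset.sum_sub_distrib]
      have hterm : ∀ k, q' k * g k - q k * g k = (q' k - q k) * g k := fun k => by ring
      simp_rw [hterm]
      rw [← Finset.sum_subset (Finset.subset_univ ({i₀, l} : Finset (Fin n)))]
      · rw [Finset.sum_pair (fun h => hli h.symm), hq'i₀, hq'l]
        ring
      · intro x _ hx
        simp only [Finset.mem_insert, Finset.mem_singleton] at hx
        push_neg at hx
        rw [hq'other x hx.1 hx.2, sub_self, zero_mul]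
    have hi₀F : i₀ ∈ F := by by_contra hc; exact hqi₀ (hq0 _ hc)
    have hlF : l ∈ F := by by_contra hc; exact hql (hq0 _ hc)
    have hq0' : ∀ k ∉ F, q' k = 0 := by
      intro k hk
      rw [hq'other k (fun h => hk (h ▸ hi₀F)) (fun h => hk (h ▸ hlF))]
      exact hq0 k hk
    -- the measure strictly decreases
    have hWi : m.toSyn (mdeg m (q' i₀ * g i₀)) < m.toSyn (mdeg m (q i₀ * g i₀)) := by
      have hqB : m.toSyn (mdeg m (q i₀ * g i₀)) = B := hB.symm
      rcases eq_or_ne (q' i₀) 0 with h0 | h0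
      · rw [h0, zero_mul, mdeg_zero, map_zero, hqB]
        exact hBpos
      · have hsub : m.toSyn (mdeg m (q' i₀)) < m.toSyn (mdeg m (q i₀)) := by
          rw [hq'i₀]
          exact toSyn_mdeg_sub_lt htl.symm htlc.symm (hq'i₀ ▸ h0)
        rw [mdeg_term ha h0, mdeg_term ha hqi₀, map_add, map_add]
        exact add_lt_add_of_lt_of_le hsub le_rfl
    have hWl : m.toSyn (mdeg m (q' l * g l)) ≤ m.toSyn (mdeg m (q l * g l)) := by
      rcases eq_or_ne (q' l) 0 with h0 | h0
      · rw [h0, zero_mul, mdeg_zero, map_zero]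
        exact m.bot_eq_zero ▸ bot_le
      · have hsub : m.toSyn (mdeg m (q' l)) ≤ m.toSyn (mdeg m (q l)) := by
          rw [hq'l]
          have hmem := mdeg_mem_support (m := m) (show q l + t * g i₀ ≠ 0 from hq'l ▸ h0)
          rcases Finset.mem_union.mp (MvPolynomial.support_add hmem) with h | h
          · exact le_toSyn_mdeg h
          · exact le_trans (le_toSyn_mdeg h) (le_of_eq (congrArg _ hti))
        rw [mdeg_term ha h0, mdeg_term ha hql, map_add, map_add]
        exact add_le_add hsub le_rfl
    have hWlt : (∑ k, m.toSyn (mdeg m (q' k * g k)))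
        < ∑ i, m.toSyn (mdeg m (q i * g i)) := by
      apply Finset.sum_lt_sum
      · intro k _
        rcases eq_or_ne k i₀ with rfl | h1
        · exact le_of_lt hWi
        rcases eq_or_ne k l with rfl | h2
        · exact hWl
        · rw [hq'other k h1 h2]
      · exact ⟨i₀, Finset.mem_univ _, hWi⟩
    obtain ⟨i, hiF, hile⟩ := IH _ (lt_of_lt_of_eq hWlt hw) q' rfl F hq0'
      (by rw [hq'f]; exact hf)
    rw [hq'f] at hile
    exact ⟨i, hiF, hile⟩

end LemA

/-- The ideal generated by the `gTilde i`, `i ∈ F`. -/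
noncomputable def Idl (n a : ℕ) (F : Finset (Fin n)) : Ideal (MvPolynomial (Fin n ⊕ Fin n) ℂ) :=
  Ideal.span ((F.image (gTilde n a) : Finset (MvPolynomial (Fin n ⊕ Fin n) ℂ)) :
    Set (MvPolynomial (Fin n ⊕ Fin n) ℂ))

section LemB

variable {n a : ℕ}

local notation "PS" => MvPolynomial (Fin n ⊕ Fin n) ℂ

lemma gTilde_mem_Idl {F : Finset (Fin n)} {i : Fin n} (hi : i ∈ F) :
    gTilde n a i ∈ Idl n a F :=
  Ideal.subset_span (by simp only [Finset.coe_image, Set.mem_image]; exact ⟨i, hi, rfl⟩)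

lemma mem_Idl_iff {F : Finset (Fin n)} {p : PS} :
    p ∈ Idl n a F ↔ ∃ q : Fin n → PS, (∀ i ∉ F, q i = 0) ∧ p = ∑ i, q i * gTilde n a i := by
  constructor
  · intro hp
    classical
    rw [Idl, Finset.coe_image] at hp
    have himg : gTilde n a '' (F : Set (Fin n))
        = Set.range (fun x : {x // x ∈ F} => gTilde n a x) := Set.image_eq_range _ _
    rw [himg] at hp
    obtain ⟨c, hc⟩ := Ideal.mem_span_range_iff_exists_fun.mp hp
    refine ⟨fun k => if hk : k ∈ F then c ⟨k, hk⟩ else 0, fun i hi => dif_neg hi, ?_⟩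
    rw [← hc]
    rw [← Finset.sum_subset (Finset.subset_univ F)
      (fun x _ hx => by simp only [dif_neg hx, zero_mul])]
    rw [← Finset.sum_attach F
      (fun k => (if hk : k ∈ F then c ⟨k, hk⟩ else 0) * gTilde n a k)]
    rw [Finset.univ_eq_attach]
    apply Finset.sum_congr rfl
    intro x _
    rw [dif_pos x.2]
  · rintro ⟨q, hq0, rfl⟩
    apply Ideal.sum_mem
    intro i _
    rcases Finset.decidableMem i F with hi | hi
    · rw [hq0 i hi, zero_mul]
      exact zero_mem _
    · exact Ideal.mul_mem_left _ _ (gTilde_mem_Idl hi)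

/-- Colon property: multiplication by `gTilde j` is injective modulo `Idl F` when `j ∉ F`. -/
lemma colon (ha : 2 ≤ a) {F : Finset (Fin n)} {j : Fin n} (hj : j ∉ F) :
    ∀ (w : (mo n).syn) (h : PS), (mo n).toSyn (mdeg (mo n) h) = w →
      gTilde n a j * h ∈ Idl n a F → h ∈ Idl n a F := by
  intro w
  induction w using WellFoundedLT.induction with
  | _ wc IH =>
  intro h hw hmem
  set m := mo n
  set g := gTilde n a with hgdef
  rcases eq_or_ne h 0 with rfl | hne
  · exact zero_mem _
  have hgj : g j ≠ 0 := gTilde_ne_zero ha j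
  have hgh : g j * h ≠ 0 := mul_ne_zero hgj hne
  obtain ⟨q, hq0, hq⟩ := mem_Idl_iff.mp hmem
  obtain ⟨i, hiF, hile⟩ := lemA ha _ q rfl F hq0 (hq ▸ hgh)
  rw [← hq] at hile
  have hij : i ≠ j := fun hEq => hj (hEq ▸ hiF)
  have hile' : mU n a i ≤ mdeg m h := by
    apply mU_le_of_le_add ha hij
    rwa [mdeg_mul hgj hne, mdeg_gTilde ha, add_comm] at hile
  set t : PS := monomial (mdeg m h - mU n a i) (mlc m h / (a : ℂ)) with htdef
  have htc : mlc m h / (a : ℂ) ≠ 0 := div_ne_zero (mlc_ne_zero hne) (aC_ne_zero ha)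
  have ht0 : t ≠ 0 := by rw [htdef]; simpa using htc
  have htmem : t * g i ∈ Idl n a F := Ideal.mul_mem_left _ _ (gTilde_mem_Idl hiF)
  have htl : mdeg m (t * g i) = mdeg m h := by
    rw [mdeg_mul ht0 (gTilde_ne_zero ha i), mdeg_gTilde ha, htdef, mdeg_monomial htc,
      tsub_add_cancel_of_le hile']
  have htlc : mlc m (t * g i) = mlc m h := by
    rw [mlc_mul ht0 (gTilde_ne_zero ha i), mlc_gTilde ha, htdef, mlc_monomial htc,
      div_mul_cancel₀ _ (aC_ne_zero ha)]
  rcases eq_or_ne (h - t * g i) 0 with hz | hz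
  · rw [show h = t * g i from sub_eq_zero.mp hz]
    exact htmem
  · have hdec : m.toSyn (mdeg m (h - t * g i)) < m.toSyn (mdeg m h) :=
      toSyn_mdeg_sub_lt htl.symm htlc.symm hz
    have hmem' : g j * (h - t * g i) ∈ Idl n a F := by
      rw [mul_sub]
      exact sub_mem hmem (Ideal.mul_mem_left _ _ htmem)
    have := IH _ (lt_of_lt_of_eq hdec hw) _ rfl hmem'
    have h2 : h = (h - t * g i) + t * g i := by ring
    rw [h2]
    exact add_mem this htmem

end LemB

section Glue

variable {n a : ℕ}

local notation "PS" => MvPolynomial (Fin n ⊕ Fin n) ℂ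

lemma ofList_take_eq_Idl (i : ℕ) :
    Ideal.ofList ((List.ofFn (gTilde n a)).take i)
      = Idl n a (Finset.univ.filter (fun k : Fin n => (k : ℕ) < i)) := by
  rw [Idl]
  apply congrArg Ideal.span
  ext x
  simp only [Set.mem_setOf_eq, List.mem_take_iff_getElem, Finset.coe_image, Set.mem_image,
    Finset.mem_coe, Finset.mem_filter, Finset.mem_univ, true_and, List.length_ofFn]
  constructor
  · rintro ⟨k, hk, rfl⟩
    rw [List.getElem_ofFn]
    exact ⟨⟨k, lt_of_lt_of_le (lt_min_iff.mp hk).2 (by simp)⟩, (lt_min_iff.mp hk).1, rfl⟩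
  · rintro ⟨k, hki, rfl⟩
    refine ⟨(k : ℕ), lt_min hki k.isLt, ?_⟩
    rw [List.getElem_ofFn]

lemma constantCoeff_gTilde (hn : 2 ≤ n) (j : Fin n) :
    constantCoeff (gTilde n a j) = 0 := by
  classical
  rw [gTilde_eq, map_sub, constantCoeff_monomial, constantCoeff_monomial, if_neg, if_neg]
  · simp
  · -- mV n j ≠ 0
    obtain ⟨k, hk⟩ := Fintype.exists_ne_of_one_lt_card (α := Fin n) (by simp; omega) j
    intro h0
    have := congrArg (fun f => f (Sum.inr k)) h0
    simp only [mV_apply_inr, Finsupp.coe_zero, Pi.zero_apply, if_neg hk] at this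
    exact one_ne_zero this
  · -- mU n a j ≠ 0
    intro h0
    have := congrArg (fun f => f (Sum.inl j)) h0
    simp only [mU_apply_inl, Finsupp.coe_zero, Pi.zero_apply, if_pos rfl] at this
    exact one_ne_zero this

end Glue

end GTilde


end Aux

open GTilde in
/-- For `n ≥ 4` and `2 ≤ a ≤ n−1`, the `n` elements
`g̃_j = a·r_j·u_j^{a−1} − ∏_{k≠j} u_k` form a regular sequence in
`S = ℂ[r₁,…,rₙ,u₁,…,uₙ]`. -/
theorem gTilde_isRegular_sequence (n a : ℕ) (hn : 4 ≤ n) (ha : 2 ≤ a) (han : a ≤ n - 1) :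
    RingTheory.Sequence.IsRegular (MvPolynomial (Fin n ⊕ Fin n) ℂ)
      (List.ofFn (gTilde n a)) := by
  classical
  constructor
  · -- weakly regular
    rw [RingTheory.Sequence.isWeaklyRegular_iff]
    intro i hi
    have hi' : i < n := by simpa using hi
    set F : Finset (Fin n) := Finset.univ.filter (fun k : Fin n => (k : ℕ) < i) with hF
    have hN : (Ideal.ofList ((List.ofFn (gTilde n a)).take i)
        • (⊤ : Submodule (MvPolynomial (Fin n ⊕ Fin n) ℂ) (MvPolynomial (Fin n ⊕ Fin n) ℂ)))
        = (Idl n a F : Submodule (MvPolynomial (Fin n ⊕ Fin n) ℂ)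
            (MvPolynomial (Fin n ⊕ Fin n) ℂ)) := by
      rw [Ideal.smul_eq_mul, Ideal.mul_top, ofList_take_eq_Idl]
    rw [hN]
    have hgel : (List.ofFn (gTilde n a))[i] = gTilde n a ⟨i, hi'⟩ := by
      rw [List.getElem_ofFn]
    rw [hgel]
    intro x y hxy
    obtain ⟨p, rfl⟩ := Submodule.Quotient.mk_surjective _ x
    obtain ⟨p', rfl⟩ := Submodule.Quotient.mk_surjective _ y
    simp only [← Submodule.Quotient.mk_smul] at hxy
    rw [Submodule.Quotient.eq] at hxy
    rw [Submodule.Quotient.eq]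
    have hxy' : gTilde n a ⟨i, hi'⟩ * (p - p') ∈ Idl n a F := by
      have : gTilde n a ⟨i, hi'⟩ • p - gTilde n a ⟨i, hi'⟩ • p'
          = gTilde n a ⟨i, hi'⟩ * (p - p') := by
        rw [smul_eq_mul, smul_eq_mul]; ring
      rwa [this] at hxy
    exact colon ha (by simp [hF]) _ (p - p') rfl hxy'
  · -- the ideal is proper
    intro htop
    rw [Ideal.smul_eq_mul, Ideal.mul_top] at htop
    have h1 : (1 : MvPolynomial (Fin n ⊕ Fin n) ℂ)
        ∈ Ideal.ofList (List.ofFn (gTilde n a)) := by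
      rw [← htop]; trivial
    have hker : Ideal.ofList (List.ofFn (gTilde n a))
        ≤ RingHom.ker (constantCoeff (R := ℂ) (σ := Fin n ⊕ Fin n)) := by
      rw [Ideal.span_le]
      intro x hx
      simp only [Set.mem_setOf_eq, List.mem_ofFn, Set.mem_range] at hx
      obtain ⟨k, rfl⟩ := hx
      exact constantCoeff_gTilde (by omega) k
    have := hker h1
    rw [RingHom.mem_ker, map_one] at this
    exact one_ne_zero this
end

section
/- Let n ≥ 4 and 2 ≤ a ≤ n−1 be integers. In the formal power series ring P = ℂ⟦u₁,…,uₙ⟧, the n elements g_j := a·u_j^{a−1} − ∏_{k≠j} u_k (for j = 1,…,n) form a regular sequence. -/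
/-- The element `g_j = a·u_j^{a−1} − ∏_{k≠j} u_k` of the formal power series ring
`P = ℂ⟦u₁,…,uₙ⟧`, where `u_j` is `MvPowerSeries.X j`. Up to sign, this is the
partial derivative `∂Z^n_a/∂u_j` of `Z^n_a = −u₁⋯uₙ + Σ_j u_j^a`. -/
noncomputable def gPow (n a : ℕ) (j : Fin n) : MvPowerSeries (Fin n) ℂ :=
  (a : MvPowerSeries (Fin n) ℂ) * MvPowerSeries.X j ^ (a - 1)
    - ∏ k ∈ Finset.univ.erase j, MvPowerSeries.X k

open MvPowerSeries Finsupp Finset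

namespace GPowAux

variable {n : ℕ}

def dg (d : Fin n →₀ ℕ) : ℕ := ∑ i, d i

lemma dg_add (u v : Fin n →₀ ℕ) : dg (u + v) = dg u + dg v := by
  simp [dg, Finset.sum_add_distrib]

lemma dg_single (j : Fin n) (k : ℕ) : dg (Finsupp.single j k) = k := by
  simp [dg, Finsupp.single_apply]

lemma dg_le_of_le {u d : Fin n →₀ ℕ} (h : u ≤ d) : dg u ≤ dg d :=
  Finset.sum_le_sum fun i _ => h i

lemma dg_sub_add {u d : Fin n →₀ ℕ} (h : u ≤ d) : dg (d - u) + dg u = dg d := by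
  rw [← dg_add, tsub_add_cancel_of_le h]

abbrev Pn (n : ℕ) := MvPowerSeries (Fin n) ℂ

lemma coeff_mm (u : Fin n →₀ ℕ) (r : ℂ) (f : Pn n) (d : Fin n →₀ ℕ) :
    MvPowerSeries.coeff (R := ℂ) d (MvPowerSeries.monomial (R := ℂ) u r * f)
      = if u ≤ d then r * MvPowerSeries.coeff (R := ℂ) (d - u) f else 0 := by
  rw [MvPowerSeries.coeff_monomial_mul]

/-- Build a power series from a coefficient function. -/
def ofFun (f : (Fin n →₀ ℕ) → ℂ) : Pn n := f

lemma coeff_ofFun (f : (Fin n →₀ ℕ) → ℂ) (d : Fin n →₀ ℕ) :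
    MvPowerSeries.coeff (R := ℂ) d (ofFun f) = f d := rfl

variable (q : ℕ)

/-- `X i ^ q` as a monomial. -/
noncomputable def Xq (i : Fin n) : Pn n := MvPowerSeries.monomial (R := ℂ) (Finsupp.single i q) 1

lemma coeff_Xq_mul (i : Fin n) (f : Pn n) (d : Fin n →₀ ℕ) :
    MvPowerSeries.coeff (R := ℂ) d (Xq q i * f)
      = if q ≤ d i then MvPowerSeries.coeff (R := ℂ) (d - Finsupp.single i q) f else 0 := by
  rw [Xq, coeff_mm]
  simp [Finsupp.single_le_iff]

lemma monA1 (T : Finset (Fin n)) (p : Fin n → Pn n) (d : Fin n →₀ ℕ)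
    (h : MvPowerSeries.coeff (R := ℂ) d (∑ i ∈ T, Xq q i * p i) ≠ 0) :
    ∃ i ∈ T, q ≤ d i := by
  by_contra hno
  push_neg at hno
  apply h
  rw [map_sum]
  refine Finset.sum_eq_zero fun i hi => ?_
  rw [coeff_Xq_mul, if_neg (by exact fun hq => absurd hq (Nat.not_le.2 (hno i hi)))]

lemma monA2 (T : Finset (Fin n)) (F : Pn n)
    (hF : ∀ d, MvPowerSeries.coeff (R := ℂ) d F ≠ 0 → ∃ i ∈ T, q ≤ d i) :
    ∃ p : Fin n → Pn n, (F = ∑ i ∈ T, Xq q i * p i)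
      ∧ (∀ i e, MvPowerSeries.coeff (R := ℂ) e (p i) ≠ 0 →
          MvPowerSeries.coeff (R := ℂ) (e + Finsupp.single i q) F ≠ 0)
      ∧ (∀ i, i ∉ T → p i = 0) := by
  classical
  set sel : (Fin n →₀ ℕ) → Fin n → Prop :=
    fun d i => i ∈ T ∧ q ≤ d i ∧ ∀ k ∈ T, q ≤ d k → i ≤ k with hsel
  have sel_unique : ∀ d i i', sel d i → sel d i' → i = i' := by
    intro d i i' ⟨hiT, hqi, hmin⟩ ⟨hiT', hqi', hmin'⟩
    exact le_antisymm (hmin i' hiT' hqi') (hmin' i hiT hqi)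
  refine ⟨fun i => ofFun (fun e => if sel (e + Finsupp.single i q) i
      then MvPowerSeries.coeff (R := ℂ) (e + Finsupp.single i q) F else 0), ?_, ?_, ?_⟩
  · ext d
    rw [map_sum]
    have hterm : ∀ i ∈ T, MvPowerSeries.coeff (R := ℂ) d
        (Xq q i * ofFun (fun e => if sel (e + Finsupp.single i q) i
          then MvPowerSeries.coeff (R := ℂ) (e + Finsupp.single i q) F else 0))
        = if sel d i then MvPowerSeries.coeff (R := ℂ) d F else 0 := by
      intro i _
      rw [coeff_Xq_mul]
      by_cases hle : q ≤ d i
      · rw [if_pos hle, coeff_ofFun]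
        have hdd : (d - Finsupp.single i q) + Finsupp.single i q = d :=
          tsub_add_cancel_of_le (Finsupp.single_le_iff.2 hle)
        rw [hdd]
      · rw [if_neg hle, if_neg (fun hs => hle hs.2.1)]
    rw [Finset.sum_congr rfl hterm]
    by_cases hex : ∃ i ∈ T, q ≤ d i
    · have hne : (T.filter fun k => q ≤ d k).Nonempty := by
        obtain ⟨i, hiT, hqi⟩ := hex
        exact ⟨i, Finset.mem_filter.2 ⟨hiT, hqi⟩⟩
      set i₀ := (T.filter fun k => q ≤ d k).min' hne with hi₀
      have hi₀mem := (T.filter fun k => q ≤ d k).min'_mem hne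
      rw [Finset.mem_filter] at hi₀mem
      have hseli₀ : sel d i₀ :=
        ⟨hi₀mem.1, hi₀mem.2, fun k hkT hqk =>
          Finset.min'_le _ _ (Finset.mem_filter.2 ⟨hkT, hqk⟩)⟩
      rw [Finset.sum_eq_single_of_mem i₀ hi₀mem.1
        (fun i hiT hne' => if_neg (fun hs => hne' (sel_unique d i i₀ hs hseli₀))),
        if_pos hseli₀]
    · push_neg at hex
      rw [Finset.sum_eq_zero
        (fun i hi => if_neg (fun hs => absurd hs.2.1 (Nat.not_le.2 (hex i hs.1))))]
      by_contra hc
      obtain ⟨i, hiT, hqi⟩ := hF d hc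
      exact absurd hqi (Nat.not_le.2 (hex i hiT))
  · intro i e he
    rw [coeff_ofFun] at he
    by_cases hs : sel (e + Finsupp.single i q) i
    · rw [if_pos hs] at he
      exact he
    · rw [if_neg hs] at he
      exact absurd rfl he
  · intro i hiT
    ext e
    rw [coeff_ofFun, if_neg (fun hs => hiT hs.1)]
    simp

lemma monReg (T : Finset (Fin n)) (j : Fin n) (hj : j ∉ T) (F : Pn n) (p : Fin n → Pn n)
    (h : Xq q j * F = ∑ i ∈ T, Xq q i * p i) :
    ∀ d, MvPowerSeries.coeff (R := ℂ) d F ≠ 0 → ∃ i ∈ T, q ≤ d i := by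
  intro d hd
  have h1 : MvPowerSeries.coeff (R := ℂ) (d + Finsupp.single j q) (Xq q j * F) ≠ 0 := by
    rw [coeff_Xq_mul, if_pos (by simp), add_tsub_cancel_right]
    exact hd
  rw [h] at h1
  obtain ⟨i, hiT, hqi⟩ := monA1 q T p _ h1
  refine ⟨i, hiT, ?_⟩
  have hij : i ≠ j := fun hij => hj (hij ▸ hiT)
  simpa [Finsupp.single_apply, hij.symm] using hqi


lemma koszul (t : ℕ) (T : Finset (Fin n)) (p : Fin n → Pn n)
    (hsum : ∑ i ∈ T, Xq q i * p i = 0)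
    (hhom : ∀ i ∈ T, ∀ e, MvPowerSeries.coeff (R := ℂ) e (p i) ≠ 0 → dg e = t) :
    ∃ s : Fin n → Fin n → Pn n,
      (∀ i k, s i k = - s k i)
      ∧ (∀ i ∈ T, p i = ∑ k ∈ T, Xq q k * s i k)
      ∧ (∀ i k e, MvPowerSeries.coeff (R := ℂ) e (s i k) ≠ 0 → q + dg e = t) := by
  classical
  induction T using Finset.cons_induction generalizing p with
  | empty =>
    exact ⟨0, fun i k => by simp, fun i hi => absurd hi (Finset.notMem_empty i),
      fun i k e he => (he (by simp)).elim⟩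
  | cons j T hj ih =>
    rw [Finset.sum_cons] at hsum
    have hXj : Xq q j * p j = ∑ i ∈ T, Xq q i * (-p i) := by
      have : Xq q j * p j = -∑ i ∈ T, Xq q i * p i := by linear_combination hsum
      rw [this, ← Finset.sum_neg_distrib]
      exact Finset.sum_congr rfl fun i _ => by ring
    have hsupp := monReg q T j hj (p j) (fun i => -p i) hXj
    obtain ⟨cc, hccrep, hccsupp, hcczero⟩ := monA2 q T (p j) hsupp
    have hcchom : ∀ i e, MvPowerSeries.coeff (R := ℂ) e (cc i) ≠ 0 → q + dg e = t := by
      intro i e he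
      have h1 := hccsupp i e he
      have h2 := hhom j (Finset.mem_cons_self j T) _ h1
      rw [dg_add, dg_single] at h2
      omega
    have hsum' : ∑ i ∈ T, Xq q i * (p i + Xq q j * cc i) = 0 := by
      have expand : ∑ i ∈ T, Xq q i * (p i + Xq q j * cc i)
          = ∑ i ∈ T, Xq q i * p i + Xq q j * ∑ i ∈ T, Xq q i * cc i := by
        rw [Finset.mul_sum, ← Finset.sum_add_distrib]
        exact Finset.sum_congr rfl fun i _ => by ring
      rw [expand, ← hccrep]
      linear_combination hsum
    have hhom' : ∀ i ∈ T, ∀ e, MvPowerSeries.coeff (R := ℂ) e (p i + Xq q j * cc i) ≠ 0 → dg e = t := by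
      intro i hi e he
      rw [map_add] at he
      by_cases h1 : MvPowerSeries.coeff (R := ℂ) e (p i) ≠ 0
      · exact hhom i (Finset.mem_cons_of_mem hi) e h1
      · push_neg at h1
        rw [h1, zero_add, coeff_Xq_mul] at he
        by_cases hle : q ≤ e j
        · rw [if_pos hle] at he
          have h3 := hcchom i _ he
          have h4 := dg_sub_add (Finsupp.single_le_iff.2 hle) (d := e)
          rw [dg_single] at h4
          omega
        · rw [if_neg hle] at he
          exact absurd rfl he
    obtain ⟨s', hanti', hrep', hhomS'⟩ := ih _ hsum' hhom'
    refine ⟨fun i k => if i = j then (if k = j then 0 else cc k)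
      else if k = j then -(cc i) else s' i k, ?_, ?_, ?_⟩
    · intro i k
      by_cases hi : i = j <;> by_cases hk : k = j <;> simp [hi, hk, hanti' i k]
    · intro i hi
      rcases Finset.mem_cons.1 hi with hij | hiT
      · subst hij
        rw [Finset.sum_cons]
        beta_reduce
        rw [if_pos rfl, if_pos rfl, mul_zero, zero_add]
        rw [hccrep]
        refine Finset.sum_congr rfl fun k hk => ?_
        have hkj : ¬(k = i) := fun h => hj (h ▸ hk)
        beta_reduce
        rw [if_pos rfl, if_neg hkj]
      · have hij : ¬(i = j) := fun h => hj (h ▸ hiT)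
        have := hrep' i hiT
        have heq : p i = ∑ k ∈ T, Xq q k * s' i k - Xq q j * cc i := by
          rw [← this]; ring
        rw [heq, Finset.sum_cons]
        beta_reduce
        rw [if_neg hij, if_pos rfl]
        have : ∀ k ∈ T, Xq q k * (if i = j then (if k = j then 0 else cc k)
            else if k = j then -(cc i) else s' i k) = Xq q k * s' i k := by
          intro k hk
          have hkj : ¬(k = j) := fun h => hj (h ▸ hk)
          rw [if_neg hij, if_neg hkj]
        rw [Finset.sum_congr rfl this]
        ring
    · intro i k e he
      by_cases hi : i = j <;> by_cases hk : k = j <;>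
        simp only [hi, hk, if_pos, if_neg, ite_true, ite_false] at he
      · simp at he
      · exact hcchom k e he
      · rw [map_neg] at he
        exact hcchom i e (fun h0 => he (by rw [h0, neg_zero]))
      · exact hhomS' i k e he

variable (c : ℂ) (w : Fin n → (Fin n →₀ ℕ))

/-- The generators: `G i = c·X_i^q - monomial (w i)`. -/
noncomputable def Gg (i : Fin n) : Pn n :=
  MvPowerSeries.monomial (R := ℂ) (Finsupp.single i q) c - MvPowerSeries.monomial (R := ℂ) (w i) 1

/-- The weight-`w` monomial. -/
noncomputable def Ww (i : Fin n) : Pn n := MvPowerSeries.monomial (R := ℂ) (w i) 1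

lemma Gg_eq (i : Fin n) : Gg q c w i = c • Xq q i - Ww w i := by
  rw [Gg, Xq, Ww, ← map_smul, smul_eq_mul, mul_one]

lemma coeff_Ww_mul (i : Fin n) (f : Pn n) (d : Fin n →₀ ℕ) :
    MvPowerSeries.coeff (R := ℂ) d (Ww w i * f)
      = if w i ≤ d then MvPowerSeries.coeff (R := ℂ) (d - w i) f else 0 := by
  rw [Ww, coeff_mm]; simp

lemma coeff_Gg_mul (i : Fin n) (f : Pn n) (d : Fin n →₀ ℕ) :
    MvPowerSeries.coeff (R := ℂ) d (Gg q c w i * f)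
      = (if q ≤ d i then c * MvPowerSeries.coeff (R := ℂ) (d - Finsupp.single i q) f else 0)
        - (if w i ≤ d then MvPowerSeries.coeff (R := ℂ) (d - w i) f else 0) := by
  rw [Gg_eq, sub_mul, map_sub, smul_mul_assoc, MvPowerSeries.coeff_smul, coeff_Xq_mul,
    coeff_Ww_mul]
  by_cases hle : q ≤ d i <;> simp [hle]

/-- `f` has order at least `N` : all coefficients in degrees `< N` vanish. -/
def OGE (N : ℕ) (f : Pn n) : Prop := ∀ d, dg d < N → MvPowerSeries.coeff (R := ℂ) d f = 0

lemma OGE_mono {M N : ℕ} (hMN : M ≤ N) {f : Pn n} (h : OGE N f) : OGE M f :=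
  fun d hd => h d (lt_of_lt_of_le hd hMN)

/-- Homogeneous component of degree `t`. -/
noncomputable def hcomp (t : ℕ) (f : Pn n) : Pn n :=
  ofFun (fun d => if dg d = t then MvPowerSeries.coeff (R := ℂ) d f else 0)

lemma coeff_hcomp (t : ℕ) (f : Pn n) (d : Fin n →₀ ℕ) :
    MvPowerSeries.coeff (R := ℂ) d (hcomp t f)
      = if dg d = t then MvPowerSeries.coeff (R := ℂ) d f else 0 := rfl

lemma sum_antisym (T : Finset (Fin n)) (f : Fin n → Fin n → Pn n)
    (hf : ∀ i k, f i k = - f k i) :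
    ∑ i ∈ T, ∑ k ∈ T, f i k = 0 := by
  have h1 : ∑ i ∈ T, ∑ k ∈ T, f i k = -∑ i ∈ T, ∑ k ∈ T, f i k := by
    calc ∑ i ∈ T, ∑ k ∈ T, f i k
        = ∑ i ∈ T, ∑ k ∈ T, -(f k i) :=
          Finset.sum_congr rfl fun i _ => Finset.sum_congr rfl fun k _ => hf i k
      _ = -∑ i ∈ T, ∑ k ∈ T, f k i := by
          rw [← Finset.sum_neg_distrib]
          exact Finset.sum_congr rfl fun i _ => by rw [← Finset.sum_neg_distrib]
      _ = -∑ i ∈ T, ∑ k ∈ T, f i k := by rw [Finset.sum_comm]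
  have h2 : (2 : ℂ) • (∑ i ∈ T, ∑ k ∈ T, f i k) = 0 := by
    rw [two_smul]
    nth_rewrite 2 [h1]
    rw [add_neg_cancel]
  rcases smul_eq_zero.1 h2 with h | h
  · exact absurd h two_ne_zero
  · exact h

lemma improveStep (hc : c ≠ 0) (hw : ∀ i, q + 1 ≤ dg (w i)) (T : Finset (Fin n)) (t : ℕ)
    (h : Fin n → Pn n) (hordh : ∀ i ∈ T, OGE t (h i))
    (hord : OGE (t + q + 1) (∑ i ∈ T, Gg q c w i * h i)) :
    ∃ h' : Fin n → Pn n, (∑ i ∈ T, Gg q c w i * h' i = ∑ i ∈ T, Gg q c w i * h i)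
      ∧ ∀ i ∈ T, OGE (t + 1) (h' i) := by
  classical
  -- the syzygy between the homogeneous components of degree t
  have hsyz : ∑ i ∈ T, Xq q i * hcomp t (h i) = 0 := by
    ext d
    rw [map_sum, map_zero]
    by_cases hdeg : dg d = t + q
    · have h0 : MvPowerSeries.coeff (R := ℂ) d (∑ i ∈ T, Gg q c w i * h i) = 0 :=
        hord d (by omega)
      rw [map_sum] at h0
      have hterm : ∀ i ∈ T, MvPowerSeries.coeff (R := ℂ) d (Gg q c w i * h i)
          = c * MvPowerSeries.coeff (R := ℂ) d (Xq q i * hcomp t (h i)) := by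
        intro i hi
        rw [coeff_Gg_mul, coeff_Xq_mul]
        have hW : (if w i ≤ d then MvPowerSeries.coeff (R := ℂ) (d - w i) (h i) else 0) = 0 := by
          by_cases hle : w i ≤ d
          · rw [if_pos hle]
            refine hordh i hi _ ?_
            have := dg_sub_add hle
            have := hw i
            omega
          · rw [if_neg hle]
        rw [hW, sub_zero]
        by_cases hle : q ≤ d i
        · rw [if_pos hle, if_pos hle, coeff_hcomp]
          have hds : dg (d - Finsupp.single i q) = t := by
            have := dg_sub_add (Finsupp.single_le_iff.2 hle) (d := d)
            rw [dg_single] at this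
            omega
          rw [if_pos hds]
        · rw [if_neg hle, if_neg hle, mul_zero]
      rw [Finset.sum_congr rfl hterm, ← Finset.mul_sum] at h0
      rcases mul_eq_zero.1 h0 with hc0 | hres
      · exact absurd hc0 hc
      · exact hres
    · refine Finset.sum_eq_zero fun i hi => ?_
      rw [coeff_Xq_mul]
      by_cases hle : q ≤ d i
      · rw [if_pos hle, coeff_hcomp, if_neg]
        intro hds
        have h4 := dg_sub_add (Finsupp.single_le_iff.2 hle) (d := d)
        rw [dg_single] at h4
        omega
      · rw [if_neg hle]
  have hhom : ∀ i ∈ T, ∀ e, MvPowerSeries.coeff (R := ℂ) e (hcomp t (h i)) ≠ 0 → dg e = t := by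
    intro i _ e he
    rw [coeff_hcomp] at he
    by_cases hd : dg e = t
    · exact hd
    · rw [if_neg hd] at he
      exact absurd rfl he
  obtain ⟨s, hanti, hrep, hshom⟩ := koszul q t T _ hsyz hhom
  refine ⟨fun i => h i - hcomp t (h i) + c⁻¹ • (∑ k ∈ T, Ww w k * s i k), ?_, ?_⟩
  · have key1 : ∑ i ∈ T, Gg q c w i * hcomp t (h i)
        = -∑ i ∈ T, ∑ k ∈ T, Ww w i * (Xq q k * s i k) := by
      calc ∑ i ∈ T, Gg q c w i * hcomp t (h i)
          = ∑ i ∈ T, (c • (Xq q i * hcomp t (h i)) - Ww w i * hcomp t (h i)) := by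
            refine Finset.sum_congr rfl fun i _ => ?_
            rw [Gg_eq, sub_mul, smul_mul_assoc]
        _ = c • ∑ i ∈ T, Xq q i * hcomp t (h i) - ∑ i ∈ T, Ww w i * hcomp t (h i) := by
            rw [Finset.sum_sub_distrib, Finset.smul_sum]
        _ = -∑ i ∈ T, Ww w i * hcomp t (h i) := by rw [hsyz, smul_zero, zero_sub]
        _ = -∑ i ∈ T, ∑ k ∈ T, Ww w i * (Xq q k * s i k) := by
            congr 1
            refine Finset.sum_congr rfl fun i hi => ?_
            rw [hrep i hi, Finset.mul_sum]
    have key2 : ∑ i ∈ T, Gg q c w i * (c⁻¹ • ∑ k ∈ T, Ww w k * s i k)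
        = ∑ i ∈ T, ∑ k ∈ T, Xq q i * (Ww w k * s i k) := by
      calc ∑ i ∈ T, Gg q c w i * (c⁻¹ • ∑ k ∈ T, Ww w k * s i k)
          = c⁻¹ • ∑ i ∈ T, ∑ k ∈ T, Gg q c w i * (Ww w k * s i k) := by
            rw [Finset.smul_sum]
            refine Finset.sum_congr rfl fun i _ => ?_
            rw [mul_smul_comm, Finset.mul_sum]
        _ = c⁻¹ • (c • ∑ i ∈ T, ∑ k ∈ T, Xq q i * (Ww w k * s i k)
              - ∑ i ∈ T, ∑ k ∈ T, Ww w i * (Ww w k * s i k)) := by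
            congr 1
            rw [Finset.smul_sum, ← Finset.sum_sub_distrib]
            refine Finset.sum_congr rfl fun i _ => ?_
            rw [Finset.smul_sum, ← Finset.sum_sub_distrib]
            refine Finset.sum_congr rfl fun k _ => ?_
            rw [Gg_eq, sub_mul, smul_mul_assoc]
        _ = c⁻¹ • (c • ∑ i ∈ T, ∑ k ∈ T, Xq q i * (Ww w k * s i k)) := by
            have hWW : ∑ i ∈ T, ∑ k ∈ T, Ww w i * (Ww w k * s i k) = 0 :=
              sum_antisym T _ (fun i k => by rw [hanti i k]; ring)
            rw [hWW, sub_zero]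
        _ = ∑ i ∈ T, ∑ k ∈ T, Xq q i * (Ww w k * s i k) := by
            rw [smul_smul, inv_mul_cancel₀ hc, one_smul]
    have key3 : ∑ i ∈ T, ∑ k ∈ T,
        (Xq q i * (Ww w k * s i k) + Ww w i * (Xq q k * s i k)) = 0 :=
      sum_antisym T _ (fun i k => by rw [hanti i k]; ring)
    have key3' : (∑ i ∈ T, ∑ k ∈ T, Xq q i * (Ww w k * s i k))
        + ∑ i ∈ T, ∑ k ∈ T, Ww w i * (Xq q k * s i k) = 0 := by
      calc (∑ i ∈ T, ∑ k ∈ T, Xq q i * (Ww w k * s i k))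
            + ∑ i ∈ T, ∑ k ∈ T, Ww w i * (Xq q k * s i k)
          = ∑ i ∈ T, ((∑ k ∈ T, Xq q i * (Ww w k * s i k))
              + ∑ k ∈ T, Ww w i * (Xq q k * s i k)) := Finset.sum_add_distrib.symm
        _ = ∑ i ∈ T, ∑ k ∈ T,
              (Xq q i * (Ww w k * s i k) + Ww w i * (Xq q k * s i k)) :=
            Finset.sum_congr rfl fun i _ => Finset.sum_add_distrib.symm
        _ = 0 := key3
    have expand : ∑ i ∈ T, Gg q c w i
          * (h i - hcomp t (h i) + c⁻¹ • (∑ k ∈ T, Ww w k * s i k))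
        = (∑ i ∈ T, Gg q c w i * h i) - (∑ i ∈ T, Gg q c w i * hcomp t (h i))
          + ∑ i ∈ T, Gg q c w i * (c⁻¹ • ∑ k ∈ T, Ww w k * s i k) := by
      rw [← Finset.sum_sub_distrib, ← Finset.sum_add_distrib]
      exact Finset.sum_congr rfl fun i _ => by ring
    rw [expand, key1, key2]
    linear_combination key3'
  · intro i hi d hd
    rw [map_add, map_sub, MvPowerSeries.coeff_smul]
    have h3 : MvPowerSeries.coeff (R := ℂ) d (∑ k ∈ T, Ww w k * s i k) = 0 := by
      rw [map_sum]
      refine Finset.sum_eq_zero fun k hk => ?_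
      rw [coeff_Ww_mul]
      by_cases hle : w k ≤ d
      · rw [if_pos hle]
        by_contra hne
        have h4 := hshom i k _ hne
        have h5 := dg_sub_add hle
        have h6 := hw k
        omega
      · rw [if_neg hle]
    have h12 : MvPowerSeries.coeff (R := ℂ) d (h i) - MvPowerSeries.coeff (R := ℂ) d (hcomp t (h i)) = 0 := by
      rw [coeff_hcomp]
      by_cases hdt : dg d = t
      · rw [if_pos hdt, sub_self]
      · rw [if_neg hdt, sub_zero]
        exact hordh i hi d (by omega)
    rw [h3, h12, mul_zero, add_zero]


lemma improve (hc : c ≠ 0) (hw : ∀ i, q + 1 ≤ dg (w i)) (T : Finset (Fin n)) :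
    ∀ (N : ℕ) (h : Fin n → Pn n), OGE (N + q) (∑ i ∈ T, Gg q c w i * h i) →
    ∃ h' : Fin n → Pn n, (∑ i ∈ T, Gg q c w i * h' i = ∑ i ∈ T, Gg q c w i * h i)
      ∧ ∀ i ∈ T, OGE N (h' i) := by
  intro N
  induction N with
  | zero => exact fun h _ => ⟨h, rfl, fun i _ d hd => absurd hd (Nat.not_lt_zero _)⟩
  | succ N ih =>
    intro h hord
    obtain ⟨h₁, heq, hord₁⟩ := ih h (OGE_mono (by omega) hord)
    have hord' : OGE (N + q + 1) (∑ i ∈ T, Gg q c w i * h₁ i) := by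
      rw [heq]
      exact OGE_mono (by omega) hord
    obtain ⟨h', heq', hordh'⟩ := improveStep q c w hc hw T N h₁ hord₁ hord'
    exact ⟨h', heq'.trans heq, hordh'⟩

lemma stepS (hc : c ≠ 0) (hw : ∀ i, q + 1 ≤ dg (w i)) (T : Finset (Fin n))
    (j : Fin n) (hj : j ∉ T) (N : ℕ) (r : Pn n) (h : Fin n → Pn n)
    (hordr : OGE N r) (hrel : Gg q c w j * r = ∑ i ∈ T, Gg q c w i * h i) :
    ∃ (p : Fin n → Pn n) (h' : Fin n → Pn n),
      OGE (N + 1) (r - ∑ i ∈ T, Gg q c w i * p i)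
      ∧ (Gg q c w j * (r - ∑ i ∈ T, Gg q c w i * p i) = ∑ i ∈ T, Gg q c w i * h' i)
      ∧ (∀ i e, MvPowerSeries.coeff (R := ℂ) e (p i) ≠ 0 → q + dg e = N) := by
  classical
  -- the product has order ≥ N + q
  have hordGr : OGE (N + q) (Gg q c w j * r) := by
    intro d hd
    rw [coeff_Gg_mul]
    have h1 : (if q ≤ d j then c * MvPowerSeries.coeff (R := ℂ) (d - Finsupp.single j q) r else 0)
        = 0 := by
      by_cases hle : q ≤ d j
      · rw [if_pos hle]
        have h2 := dg_sub_add (Finsupp.single_le_iff.2 hle) (d := d)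
        rw [dg_single] at h2
        rw [hordr _ (by omega), mul_zero]
      · rw [if_neg hle]
    have h2 : (if w j ≤ d then MvPowerSeries.coeff (R := ℂ) (d - w j) r else 0) = 0 := by
      by_cases hle : w j ≤ d
      · rw [if_pos hle]
        have h3 := dg_sub_add hle
        have h4 := hw j
        exact hordr _ (by omega)
      · rw [if_neg hle]
    rw [h1, h2, sub_zero]
  rw [hrel] at hordGr
  obtain ⟨h₁, heq₁, hord₁⟩ := improve q c w hc hw T N h hordGr
  have hrel₁ : Gg q c w j * r = ∑ i ∈ T, Gg q c w i * h₁ i := by rw [heq₁, hrel]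
  -- homogeneous division identity in degree N + q
  have hdiv : Xq q j * hcomp N r = ∑ i ∈ T, Xq q i * hcomp N (h₁ i) := by
    ext d
    rw [map_sum]
    by_cases hdeg : dg d = N + q
    · have hcoeq := congrArg (MvPowerSeries.coeff (R := ℂ) d) hrel₁
      rw [map_sum] at hcoeq
      have hL : MvPowerSeries.coeff (R := ℂ) d (Gg q c w j * r)
          = c * MvPowerSeries.coeff (R := ℂ) d (Xq q j * hcomp N r) := by
        rw [coeff_Gg_mul, coeff_Xq_mul]
        have h2 : (if w j ≤ d then MvPowerSeries.coeff (R := ℂ) (d - w j) r else 0) = 0 := by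
          by_cases hle : w j ≤ d
          · rw [if_pos hle]
            have h3 := dg_sub_add hle
            have h4 := hw j
            exact hordr _ (by omega)
          · rw [if_neg hle]
        rw [h2, sub_zero]
        by_cases hle : q ≤ d j
        · rw [if_pos hle, if_pos hle, coeff_hcomp]
          have h5 := dg_sub_add (Finsupp.single_le_iff.2 hle) (d := d)
          rw [dg_single] at h5
          rw [if_pos (by omega)]
        · rw [if_neg hle, if_neg hle, mul_zero]
      have hR : ∀ i ∈ T, MvPowerSeries.coeff (R := ℂ) d (Gg q c w i * h₁ i)
          = c * MvPowerSeries.coeff (R := ℂ) d (Xq q i * hcomp N (h₁ i)) := by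
        intro i hi
        rw [coeff_Gg_mul, coeff_Xq_mul]
        have h2 : (if w i ≤ d then MvPowerSeries.coeff (R := ℂ) (d - w i) (h₁ i) else 0) = 0 := by
          by_cases hle : w i ≤ d
          · rw [if_pos hle]
            have h3 := dg_sub_add hle
            have h4 := hw i
            exact hord₁ i hi _ (by omega)
          · rw [if_neg hle]
        rw [h2, sub_zero]
        by_cases hle : q ≤ d i
        · rw [if_pos hle, if_pos hle, coeff_hcomp]
          have h5 := dg_sub_add (Finsupp.single_le_iff.2 hle) (d := d)
          rw [dg_single] at h5
          rw [if_pos (by omega)]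
        · rw [if_neg hle, if_neg hle, mul_zero]
      rw [hL, Finset.sum_congr rfl hR, ← Finset.mul_sum] at hcoeq
      exact mul_left_cancel₀ hc hcoeq
    · have hL : MvPowerSeries.coeff (R := ℂ) d (Xq q j * hcomp N r) = 0 := by
        rw [coeff_Xq_mul]
        by_cases hle : q ≤ d j
        · rw [if_pos hle, coeff_hcomp, if_neg]
          intro h5
          have h6 := dg_sub_add (Finsupp.single_le_iff.2 hle) (d := d)
          rw [dg_single] at h6
          omega
        · rw [if_neg hle]
      rw [hL]
      refine (Finset.sum_eq_zero fun i hi => ?_).symm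
      rw [coeff_Xq_mul]
      by_cases hle : q ≤ d i
      · rw [if_pos hle, coeff_hcomp, if_neg]
        intro h5
        have h6 := dg_sub_add (Finsupp.single_le_iff.2 hle) (d := d)
        rw [dg_single] at h6
        omega
      · rw [if_neg hle]
  have hsupp := monReg q T j hj (hcomp N r) _ hdiv
  obtain ⟨p', hrep', hsupp', hzero'⟩ := monA2 q T (hcomp N r) hsupp
  have hphom : ∀ i e, MvPowerSeries.coeff (R := ℂ) e (p' i) ≠ 0 → q + dg e = N := by
    intro i e he
    have h1 := hsupp' i e he
    rw [coeff_hcomp] at h1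
    by_cases hdd : dg (e + Finsupp.single i q) = N
    · rw [dg_add, dg_single] at hdd
      omega
    · rw [if_neg hdd] at h1
      exact absurd rfl h1
  refine ⟨fun i => c⁻¹ • p' i, fun i => h₁ i - Gg q c w j * (c⁻¹ • p' i), ?_, ?_, ?_⟩
  · -- order of the new remainder
    have hGgp : ∑ i ∈ T, Gg q c w i * (c⁻¹ • p' i)
        = hcomp N r - c⁻¹ • ∑ i ∈ T, Ww w i * p' i := by
      calc ∑ i ∈ T, Gg q c w i * (c⁻¹ • p' i)
          = ∑ i ∈ T, (Xq q i * p' i - c⁻¹ • (Ww w i * p' i)) := by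
            refine Finset.sum_congr rfl fun i _ => ?_
            rw [Gg_eq, sub_mul, smul_mul_assoc, mul_smul_comm, mul_smul_comm,
              smul_smul, mul_inv_cancel₀ hc, one_smul]
        _ = (∑ i ∈ T, Xq q i * p' i) - c⁻¹ • ∑ i ∈ T, Ww w i * p' i := by
            rw [Finset.sum_sub_distrib, Finset.smul_sum]
        _ = hcomp N r - c⁻¹ • ∑ i ∈ T, Ww w i * p' i := by rw [← hrep']
    rw [hGgp]
    intro d hd
    have hstep : r - (hcomp N r - c⁻¹ • ∑ i ∈ T, Ww w i * p' i)
        = (r - hcomp N r) + c⁻¹ • ∑ i ∈ T, Ww w i * p' i := by ring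
    rw [hstep, map_add, map_sub, MvPowerSeries.coeff_smul]
    have h1 : MvPowerSeries.coeff (R := ℂ) d r - MvPowerSeries.coeff (R := ℂ) d (hcomp N r) = 0 := by
      rw [coeff_hcomp]
      by_cases hdt : dg d = N
      · rw [if_pos hdt, sub_self]
      · rw [if_neg hdt, sub_zero]
        exact hordr d (by omega)
    have h2 : MvPowerSeries.coeff (R := ℂ) d (∑ i ∈ T, Ww w i * p' i) = 0 := by
      rw [map_sum]
      refine Finset.sum_eq_zero fun i hi => ?_
      rw [coeff_Ww_mul]
      by_cases hle : w i ≤ d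
      · rw [if_pos hle]
        by_contra hne
        have h3 := hphom i _ hne
        have h4 := dg_sub_add hle
        have h5 := hw i
        omega
      · rw [if_neg hle]
    rw [h1, h2, mul_zero, add_zero]
  · -- new relation
    have hterm : ∀ i ∈ T, Gg q c w i * (h₁ i - Gg q c w j * (c⁻¹ • p' i))
        = Gg q c w i * h₁ i - Gg q c w j * (Gg q c w i * (c⁻¹ • p' i)) := fun i _ => by ring
    rw [Finset.sum_congr rfl hterm, Finset.sum_sub_distrib, ← hrel₁, ← Finset.mul_sum,
      ← mul_sub]
  · intro i e he
    rw [MvPowerSeries.coeff_smul] at he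
    exact hphom i e fun h0 => he (by rw [h0, mul_zero])

/-- Core theorem: if `G j * f` lies in the "ideal" generated by `G i`, `i ∈ T`,
`j ∉ T`, then so does `f`. -/
theorem core (hc : c ≠ 0) (hw : ∀ i, q + 1 ≤ dg (w i)) (T : Finset (Fin n))
    (j : Fin n) (hj : j ∉ T) (f : Pn n) (h₀ : Fin n → Pn n)
    (hrel : Gg q c w j * f = ∑ i ∈ T, Gg q c w i * h₀ i) :
    ∃ H : Fin n → Pn n, f = ∑ i ∈ T, Gg q c w i * H i := by
  classical
  set Inv : ℕ → (Pn n × (Fin n → Pn n)) → Prop := fun N x =>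
    OGE N x.1 ∧ Gg q c w j * x.1 = ∑ i ∈ T, Gg q c w i * x.2 i with hInvDef
  have hstep : ∀ N (x : Pn n × (Fin n → Pn n)), Inv N x →
      ∃ y : (Pn n × (Fin n → Pn n)) × (Fin n → Pn n),
        Inv (N+1) y.1 ∧ y.1.1 = x.1 - ∑ i ∈ T, Gg q c w i * y.2 i
        ∧ (∀ i e, MvPowerSeries.coeff (R := ℂ) e (y.2 i) ≠ 0 → q + dg e = N) := by
    intro N x hx
    obtain ⟨p, h', hord', hrel', hphom⟩ :=
      stepS q c w hc hw T j hj N x.1 x.2 hx.1 hx.2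
    exact ⟨((x.1 - ∑ i ∈ T, Gg q c w i * p i, h'), p), ⟨hord', hrel'⟩, rfl, hphom⟩
  choose nextFn hInv hEq hHom using hstep
  let chain : ∀ N : ℕ, {x : Pn n × (Fin n → Pn n) // Inv N x} := fun N =>
    Nat.rec ⟨(f, h₀), ⟨fun d hd => absurd hd (Nat.not_lt_zero _), hrel⟩⟩
      (fun N prev => ⟨(nextFn N prev.1 prev.2).1, hInv N prev.1 prev.2⟩) N
  set rr : ℕ → Pn n := fun N => (chain N).1.1 with hrr
  set pp : ℕ → (Fin n → Pn n) := fun N => (nextFn N (chain N).1 (chain N).2).2 with hpp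
  have hrec : ∀ N, rr (N+1) = rr N - ∑ i ∈ T, Gg q c w i * pp N i := fun N =>
    hEq N (chain N).1 (chain N).2
  have hordrr : ∀ N, OGE N (rr N) := fun N => (chain N).2.1
  have hpphom : ∀ N i e, MvPowerSeries.coeff (R := ℂ) e (pp N i) ≠ 0 → q + dg e = N := fun N =>
    hHom N (chain N).1 (chain N).2
  have htel : ∀ M : ℕ, f = rr M + ∑ N ∈ Finset.range M, ∑ i ∈ T, Gg q c w i * pp N i := by
    intro M
    induction M with
    | zero => rw [Finset.range_zero, Finset.sum_empty, add_zero]; rfl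
    | succ M ihM =>
      rw [Finset.sum_range_succ, hrec M]
      rw [ihM]
      ring
  have hdle : ∀ (d : Fin n →₀ ℕ) (i : Fin n), d i ≤ dg d := fun d i =>
    Finset.single_le_sum (fun k _ => Nat.zero_le (d k)) (Finset.mem_univ i)
  refine ⟨fun i => ofFun (fun e => MvPowerSeries.coeff (R := ℂ) e (pp (q + dg e) i)), ?_⟩
  ext d
  have hD := htel (dg d + 1)
  have hcf := congrArg (MvPowerSeries.coeff (R := ℂ) d) hD
  rw [map_add, hordrr (dg d + 1) d (by omega), zero_add, map_sum] at hcf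
  have hL : ∑ N ∈ Finset.range (dg d + 1),
        MvPowerSeries.coeff (R := ℂ) d (∑ i ∈ T, Gg q c w i * pp N i)
      = ∑ i ∈ T, ∑ N ∈ Finset.range (dg d + 1),
          MvPowerSeries.coeff (R := ℂ) d (Gg q c w i * pp N i) := by
    rw [Finset.sum_congr rfl fun N _ =>
      map_sum (MvPowerSeries.coeff (R := ℂ) d) (fun i => Gg q c w i * pp N i) T]
    exact Finset.sum_comm
  have hR : MvPowerSeries.coeff (R := ℂ) d
        (∑ i ∈ T, Gg q c w i * ofFun (fun e => MvPowerSeries.coeff (R := ℂ) e (pp (q + dg e) i)))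
      = ∑ i ∈ T, MvPowerSeries.coeff (R := ℂ) d
          (Gg q c w i * ofFun (fun e => MvPowerSeries.coeff (R := ℂ) e (pp (q + dg e) i))) :=
    map_sum _ _ _
  rw [hcf, hL, hR]
  refine Finset.sum_congr rfl fun i _ => ?_
  have hsplit : ∑ N ∈ Finset.range (dg d + 1),
        (MvPowerSeries.coeff (R := ℂ) d) (Gg q c w i * pp N i)
      = (∑ N ∈ Finset.range (dg d + 1), if q ≤ d i then
          c * MvPowerSeries.coeff (R := ℂ) (d - Finsupp.single i q) (pp N i) else 0)
        - ∑ N ∈ Finset.range (dg d + 1), if w i ≤ d then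
            MvPowerSeries.coeff (R := ℂ) (d - w i) (pp N i) else 0 := by
    rw [← Finset.sum_sub_distrib]
    exact Finset.sum_congr rfl fun N _ => coeff_Gg_mul q c w i (pp N i) d
  rw [hsplit, coeff_Gg_mul]
  congr 1
  · -- the Xq-part
    by_cases hle : q ≤ d i
    · simp only [if_pos hle]
      have hds : dg (d - Finsupp.single i q) + q = dg d := by
        have := dg_sub_add (Finsupp.single_le_iff.2 hle) (d := d)
        rw [dg_single] at this
        omega
      rw [Finset.sum_eq_single_of_mem (q + dg (d - Finsupp.single i q))
        (Finset.mem_range.2 (by omega))]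
      · rw [coeff_ofFun]
      · intro N _ hN
        by_contra hne
        have : c ≠ 0 ∧ MvPowerSeries.coeff (R := ℂ) (d - Finsupp.single i q) (pp N i) ≠ 0 := by
          constructor
          · exact hc
          · intro h0
            exact hne (by rw [h0, mul_zero])
        exact hN ((hpphom N i _ this.2).symm)
    · simp only [if_neg hle]
      exact Finset.sum_const_zero
  · -- the Ww-part
    by_cases hle : w i ≤ d
    · simp only [if_pos hle]
      have hds : dg (d - w i) + dg (w i) = dg d := dg_sub_add hle
      have hwi := hw i
      rw [Finset.sum_eq_single_of_mem (q + dg (d - w i))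
        (Finset.mem_range.2 (by omega))]
      · rw [coeff_ofFun]
      · intro N _ hN
        by_contra hne
        exact hN ((hpphom N i _ hne).symm)
    · simp only [if_neg hle]
      exact Finset.sum_const_zero


/-! ### Assembly for the concrete generators -/

/-- exponent of the product monomial `∏_{k ≠ j} u_k`. -/
noncomputable def mexp (j : Fin n) : Fin n →₀ ℕ :=
  ∑ k ∈ Finset.univ.erase j, Finsupp.single k 1

lemma dg_sum (s : Finset (Fin n)) (u : Fin n → (Fin n →₀ ℕ)) :
    dg (∑ k ∈ s, u k) = ∑ k ∈ s, dg (u k) := by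
  classical
  induction s using Finset.cons_induction with
  | empty => simp [dg]
  | cons j s hj ih => rw [Finset.sum_cons, Finset.sum_cons, dg_add, ih]

lemma dg_mexp (j : Fin n) : dg (mexp j) = n - 1 := by
  rw [mexp, dg_sum]
  have : ∀ k ∈ Finset.univ.erase j, dg (Finsupp.single k (1:ℕ)) = 1 :=
    fun k _ => dg_single k 1
  rw [Finset.sum_congr rfl this, Finset.sum_const, smul_eq_mul, mul_one,
    Finset.card_erase_of_mem (Finset.mem_univ j), Finset.card_univ, Fintype.card_fin]

lemma prod_X_eq (s : Finset (Fin n)) :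
    (∏ k ∈ s, MvPowerSeries.X k : Pn n)
      = MvPowerSeries.monomial (R := ℂ) (∑ k ∈ s, Finsupp.single k 1) 1 := by
  classical
  induction s using Finset.cons_induction with
  | empty => simp [MvPowerSeries.monomial_zero_eq_C]
  | cons j s hj ih =>
    rw [Finset.prod_cons, Finset.sum_cons, ih, MvPowerSeries.X_def,
      MvPowerSeries.monomial_mul_monomial, one_mul]

lemma gPow_eq_Gg (a : ℕ) (j : Fin n) :
    gPow n a j = Gg (a - 1) ((a : ℕ) : ℂ) mexp j := by
  rw [gPow, Gg, prod_X_eq]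
  congr 1
  rw [MvPowerSeries.X_pow_eq]
  have hca : ((a : ℕ) : Pn n) = MvPowerSeries.C (σ := Fin n) (R := ℂ) ((a : ℕ) : ℂ) := by
    rw [map_natCast]
  rw [hca, ← MvPowerSeries.monomial_zero_eq_C, MvPowerSeries.monomial_mul_monomial,
    zero_add, mul_one]

/-- The sum map as a linear map. -/
noncomputable def Phi (g : Fin n → Pn n) (T : Finset (Fin n)) :
    (Fin n → Pn n) →ₗ[Pn n] Pn n where
  toFun h := ∑ i ∈ T, g i * h i
  map_add' h₁ h₂ := by
    rw [← Finset.sum_add_distrib]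
    exact Finset.sum_congr rfl fun i _ => by simp [mul_add]
  map_smul' r h := by
    rw [RingHom.id_apply, Finset.smul_sum]
    exact Finset.sum_congr rfl fun i _ => by
      simp only [Pi.smul_apply, smul_eq_mul]
      ring

lemma mem_span_T (g : Fin n → Pn n) (T : Finset (Fin n)) (f : Pn n) :
    f ∈ Ideal.span (g '' (↑T : Set (Fin n)))
      ↔ ∃ h : Fin n → Pn n, f = ∑ i ∈ T, g i * h i := by
  classical
  have hspan : Ideal.span (g '' (↑T : Set (Fin n))) = LinearMap.range (Phi g T) := by
    refine le_antisymm (Ideal.span_le.2 ?_) ?_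
    · rintro x ⟨i, hiT, rfl⟩
      refine ⟨fun k => if k = i then 1 else 0, ?_⟩
      show ∑ k ∈ T, g k * (if k = i then 1 else 0) = g i
      have : ∀ k ∈ T, g k * (if k = i then (1:Pn n) else 0)
          = if k = i then g k else 0 := fun k _ => by
        by_cases hk : k = i <;> simp [hk]
      rw [Finset.sum_congr rfl this, Finset.sum_ite_eq' T i (fun k => g k),
        if_pos (by exact_mod_cast hiT)]
    · rintro x ⟨h, rfl⟩
      show ∑ i ∈ T, g i * h i ∈ _
      refine Ideal.sum_mem _ fun i hiT => ?_
      exact Ideal.mul_mem_right _ _ (Ideal.subset_span ⟨i, hiT, rfl⟩)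
  rw [hspan]
  constructor
  · rintro ⟨h, rfl⟩
    exact ⟨h, rfl⟩
  · rintro ⟨h, rfl⟩
    exact ⟨h, rfl⟩


lemma ofList_take (g : Fin n → Pn n) (m : ℕ) :
    Ideal.ofList ((List.ofFn g).take m)
      = Ideal.span (g '' ↑(Finset.univ.filter (fun k : Fin n => (k : ℕ) < m))) := by
  show Ideal.span _ = _
  congr 1
  ext x
  simp only [Set.mem_setOf_eq, List.mem_take_iff_getElem, List.getElem_ofFn,
    List.length_ofFn, Set.mem_image, Finset.coe_filter, Finset.mem_univ, true_and,
    Set.mem_setOf_eq]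
  constructor
  · rintro ⟨i, hi, rfl⟩
    exact ⟨⟨i, by omega⟩, by simp only [Fin.val_mk]; omega, rfl⟩
  · rintro ⟨k, hk, rfl⟩
    refine ⟨k.1, by omega, ?_⟩
    congr

lemma regular_of_mul_mem (I : Ideal (Pn n)) (r : Pn n)
    (hI : ∀ f, r * f ∈ I → f ∈ I) :
    IsSMulRegular ((Pn n) ⧸ (I • (⊤ : Submodule (Pn n) (Pn n)))) r := by
  have hIT : I • (⊤ : Submodule (Pn n) (Pn n)) = I := by
    rw [Ideal.smul_eq_mul, Ideal.mul_top]
  intro x y hxy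
  obtain ⟨u, rfl⟩ := Submodule.Quotient.mk_surjective _ x
  obtain ⟨v, rfl⟩ := Submodule.Quotient.mk_surjective _ y
  simp only [← Submodule.Quotient.mk_smul] at hxy
  rw [Submodule.Quotient.eq] at hxy ⊢
  rw [hIT] at hxy ⊢
  have heq : r • u - r • v = r * (u - v) := by
    rw [smul_eq_mul, smul_eq_mul, mul_sub]
  rw [heq] at hxy
  exact hI _ hxy

end GPowAux

/-- For `n ≥ 4` and `2 ≤ a ≤ n−1`, the `n` elements
`g_j = a·u_j^{a−1} − ∏_{k≠j} u_k` form a regular sequence in `P = ℂ⟦u₁,…,uₙ⟧`. -/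
theorem gPow_isRegular_sequence (n a : ℕ) (hn : 4 ≤ n) (ha : 2 ≤ a) (han : a ≤ n - 1) :
    RingTheory.Sequence.IsRegular (MvPowerSeries (Fin n) ℂ) (List.ofFn (gPow n a)) := by
  classical
  open GPowAux in
  have hc : ((a : ℕ) : ℂ) ≠ 0 := Nat.cast_ne_zero.2 (by omega)
  have hw : ∀ i : Fin n, (a - 1) + 1 ≤ dg (mexp i) := by
    intro i
    rw [dg_mexp]
    omega
  -- the main divisibility property, index by index
  have main : ∀ (m : ℕ) (hm : m < n) (f : GPowAux.Pn n),
      gPow n a ⟨m, hm⟩ * f ∈ Ideal.span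
        ((gPow n a) '' ↑(Finset.univ.filter (fun k : Fin n => (k : ℕ) < m))) →
      f ∈ Ideal.span
        ((gPow n a) '' ↑(Finset.univ.filter (fun k : Fin n => (k : ℕ) < m))) := by
    intro m hm f hf
    set T := Finset.univ.filter (fun k : Fin n => (k : ℕ) < m) with hT
    obtain ⟨h₀, hh₀⟩ := (mem_span_T (gPow n a) T _).1 hf
    have hrel : Gg (a-1) ((a:ℕ):ℂ) mexp ⟨m, hm⟩ * f
        = ∑ i ∈ T, Gg (a-1) ((a:ℕ):ℂ) mexp i * h₀ i := by
      rw [← gPow_eq_Gg]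
      rw [hh₀]
      exact Finset.sum_congr rfl fun i _ => by rw [← gPow_eq_Gg]
    have hj : (⟨m, hm⟩ : Fin n) ∉ T := by
      simp [hT]
    obtain ⟨H, hH⟩ := core (a-1) ((a:ℕ):ℂ) mexp hc hw T ⟨m, hm⟩ hj f h₀ hrel
    refine (mem_span_T (gPow n a) T f).2 ⟨H, ?_⟩
    rw [hH]
    exact Finset.sum_congr rfl fun i _ => by rw [gPow_eq_Gg]
  constructor
  case toIsWeaklyRegular =>
    constructor
    intro i hi
    have hin : i < n := by simpa using hi
    have hget : (List.ofFn (gPow n a))[i]'hi = gPow n a ⟨i, hin⟩ := by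
      simp [List.getElem_ofFn]
    rw [hget, ofList_take (gPow n a) i]
    exact regular_of_mul_mem _ _ (main i hin)
  case top_ne_smul =>
    intro htop
    rw [Ideal.smul_eq_mul, Ideal.mul_top] at htop
    have h1 : (1 : GPowAux.Pn n) ∈ Ideal.ofList (List.ofFn (gPow n a)) := by
      rw [← htop]
      trivial
    have hker : Ideal.ofList (List.ofFn (gPow n a))
        ≤ RingHom.ker (MvPowerSeries.constantCoeff (σ := Fin n) (R := ℂ)) := by
      rw [Ideal.ofList]
      refine Ideal.span_le.2 ?_
      intro x hx
      rw [Set.mem_setOf_eq, List.mem_ofFn] at hx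
      obtain ⟨k, rfl⟩ := hx
      rw [SetLike.mem_coe, RingHom.mem_ker, gPow, map_sub, map_mul, map_pow,
        MvPowerSeries.constantCoeff_X, zero_pow (by omega : a - 1 ≠ 0), mul_zero,
        map_prod]
      have hne : (Finset.univ.erase k).Nonempty := by
        rw [← Finset.card_pos, Finset.card_erase_of_mem (Finset.mem_univ k),
          Finset.card_univ, Fintype.card_fin]
        omega
      obtain ⟨k', hk'⟩ := hne
      rw [Finset.prod_eq_zero hk' (MvPowerSeries.constantCoeff_X k'), zero_sub, neg_zero]
    have := hker h1
    rw [RingHom.mem_ker, map_one] at this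
    exact one_ne_zero this
end

section
/- Let n ≥ 4 and 2 ≤ a ≤ n−1 be integers. In the formal power series ring P = ℂ⟦u₁,…,uₙ⟧, let J be the ideal generated by g_j := a·u_j^{a−1} − ∏_{k≠j} u_k for j = 1,…,n. Then (u₁⋯uₙ)^{a−1} ∈ J, and u_j^{a(a−1)} ∈ J for every j. -/
/-- For `n ≥ 4` and `2 ≤ a ≤ n−1`, in `P = ℂ⟦u₁,…,uₙ⟧` with `J` the ideal
generated by `g₁,…,gₙ`, we have `(u₁⋯uₙ)^{a−1} ∈ J` and `u_j^{a(a−1)} ∈ J` for all `j`. -/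
theorem powers_mem_power_series_jacobian_ideal (n a : ℕ) (hn : 4 ≤ n) (ha : 2 ≤ a)
    (han : a ≤ n - 1) :
    ((∏ j, MvPowerSeries.X j : MvPowerSeries (Fin n) ℂ) ^ (a - 1)
        ∈ Ideal.span (Set.range (gPow n a))) ∧
      ∀ j : Fin n, (MvPowerSeries.X j : MvPowerSeries (Fin n) ℂ) ^ (a * (a - 1))
        ∈ Ideal.span (Set.range (gPow n a)) := by
  set P := MvPowerSeries (Fin n) ℂ
  set J := Ideal.span (Set.range (gPow n a)) with hJ
  set π : P →+* P ⧸ J := Ideal.Quotient.mk J with hπ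
  set U : P := ∏ j, MvPowerSeries.X j with hU
  have hg : ∀ j, π (gPow n a j) = 0 := fun j =>
    Ideal.Quotient.eq_zero_iff_mem.2 (Ideal.subset_span ⟨j, rfl⟩)
  have hrel : ∀ j : Fin n, π (∏ k ∈ Finset.univ.erase j, MvPowerSeries.X k)
      = (a : P ⧸ J) * π (MvPowerSeries.X j) ^ (a - 1) := by
    intro j
    have h := hg j
    rw [gPow, map_sub, sub_eq_zero] at h
    rw [← h, map_mul, map_pow, map_natCast]
  -- product identity
  have hXne : ∀ j : Fin n, (MvPowerSeries.X j : P) ≠ 0 := by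
    intro j h
    have h1 := congrArg (MvPowerSeries.coeff (Finsupp.single j 1)) h
    simp [MvPowerSeries.coeff_X] at h1
  have hne : U ≠ 0 := by
    rw [hU]
    exact Finset.prod_ne_zero_iff.2 fun i _ => hXne i
  have hprodid : (∏ j : Fin n, ∏ k ∈ Finset.univ.erase j, MvPowerSeries.X k : P)
      = U ^ (n - 1) := by
    have h1 : (∏ j : Fin n, ∏ k ∈ Finset.univ.erase j, MvPowerSeries.X k : P) * U
        = U ^ (n - 1) * U := by
      rw [hU, ← Finset.prod_mul_distrib]
      have : ∀ j : Fin n, (∏ k ∈ Finset.univ.erase j, MvPowerSeries.X k : P)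
          * MvPowerSeries.X j = U := fun j => Finset.prod_erase_mul _ _ (Finset.mem_univ j)
      rw [Finset.prod_congr rfl fun j _ => this j, Finset.prod_const, Finset.card_univ,
        Fintype.card_fin, ← pow_succ, Nat.sub_add_cancel (by omega)]
    exact mul_right_cancel₀ hne h1
  -- main relation in quotient
  have hmain : π U ^ (a - 1) * (π U ^ (n - a) - (a : P ⧸ J) ^ n) = 0 := by
    have h2 : π U ^ (n - 1) = (a : P ⧸ J) ^ n * π U ^ (a - 1) := by
      calc π U ^ (n - 1) = π (∏ j : Fin n, ∏ k ∈ Finset.univ.erase j, MvPowerSeries.X k) := by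
            rw [hprodid, map_pow]
        _ = ∏ j : Fin n, ((a : P ⧸ J) * π (MvPowerSeries.X j) ^ (a - 1)) := by
            rw [map_prod]; exact Finset.prod_congr rfl fun j _ => hrel j
        _ = (a : P ⧸ J) ^ n * (∏ j : Fin n, π (MvPowerSeries.X j)) ^ (a - 1) := by
            rw [Finset.prod_mul_distrib, Finset.prod_const, Finset.card_univ,
              Fintype.card_fin, ← Finset.prod_pow]
        _ = (a : P ⧸ J) ^ n * π U ^ (a - 1) := by rw [hU, map_prod]
    have hsplit : n - 1 = (a - 1) + (n - a) := by omega
    rw [mul_sub, ← pow_add, ← hsplit, h2]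
    ring
  -- the unit
  have hVunit : IsUnit (U ^ (n - a) - (a : P)^n) := by
    rw [MvPowerSeries.isUnit_iff_constantCoeff]
    have hcU : MvPowerSeries.constantCoeff U = 0 := by
      rw [hU, map_prod]
      refine Finset.prod_eq_zero (Finset.mem_univ ⟨0, by omega⟩) ?_
      exact MvPowerSeries.constantCoeff_X _
    rw [map_sub, map_pow, map_pow, hcU, zero_pow (by omega), map_natCast, zero_sub]
    simp only [isUnit_iff_ne_zero, ne_eq, neg_eq_zero, pow_eq_zero_iff', Nat.cast_eq_zero]
    omega
  have hUa1 : π U ^ (a - 1) = 0 := by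
    have hu : IsUnit (π (U ^ (n - a) - (a : P) ^ n)) := hVunit.map π
    rw [map_sub, map_pow, map_pow, map_natCast] at hu
    exact (hu.mul_left_eq_zero).mp hmain
  have hfirst : U ^ (a - 1) ∈ J := by
    rw [← Ideal.Quotient.eq_zero_iff_mem, map_pow]
    exact hUa1
  refine ⟨hfirst, fun j => ?_⟩
  -- π U = a * π (X j) ^ a
  have hUj : π U = (a : P ⧸ J) * π (MvPowerSeries.X j) ^ a := by
    have h3 : U = MvPowerSeries.X j * ∏ k ∈ Finset.univ.erase j, MvPowerSeries.X k := by
      rw [hU, Finset.mul_prod_erase _ _ (Finset.mem_univ j)]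
    rw [h3, map_mul, hrel j, ← mul_assoc, mul_comm (π (MvPowerSeries.X j)) (a : P ⧸ J),
      mul_assoc, ← pow_succ', Nat.sub_add_cancel (by omega)]
  have h4 : (a : P ⧸ J) ^ (a - 1) * π (MvPowerSeries.X j) ^ (a * (a - 1)) = 0 := by
    have := hUa1
    rw [hUj, mul_pow, ← pow_mul] at this
    exact this
  have haunit : IsUnit ((a : P ⧸ J) ^ (a - 1)) := by
    refine (IsUnit.pow _ ?_)
    have : IsUnit ((a : P)) := by
      rw [MvPowerSeries.isUnit_iff_constantCoeff, map_natCast]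
      simp only [isUnit_iff_ne_zero, ne_eq, Nat.cast_eq_zero]; omega
    have := this.map π
    rwa [map_natCast] at this
  rw [← Ideal.Quotient.eq_zero_iff_mem, map_pow]
  exact (haunit.mul_right_eq_zero).mp h4
end

section
/- Let n ≥ 1 and a ≥ 1 be integers. Let G be the group of vectors ζ ∈ ℂⁿ with ζ_j^a = 1 for all j and ∏_j ζ_j = 1, acting on the polynomial ring ℂ[u₁,…,uₙ] by the ℂ-algebra automorphisms sending u_j to ζ_j·u_j. Then the subalgebra of elements fixed by every element of G equals the ℂ-subalgebra of ℂ[u₁,…,uₙ] generated by the n+1 elements u₁⋯uₙ and u_j^a for j = 1,…,n. -/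
open MvPolynomial

private lemma monomial_one_eq_prod {n : ℕ} (d : Fin n →₀ ℕ) :
    (monomial d (1 : ℂ)) = ∏ j, (X j : MvPolynomial (Fin n) ℂ) ^ d j := by
  rw [monomial_eq, C_1, one_mul, Finsupp.prod]
  apply Finset.prod_subset (Finset.subset_univ _)
  intro x _ hx
  simp [Finsupp.notMem_support_iff.mp hx]

private lemma aeval_scale {n : ℕ} (ζ : Fin n → ℂ) (d : Fin n →₀ ℕ) (c : ℂ) :
    aeval (fun j => C (ζ j) * X j) (monomial d c) =
      monomial d ((∏ j, ζ j ^ d j) * c) := by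
  rw [aeval_monomial]
  have h1 : (d.prod fun j e => (C (ζ j) * X j) ^ e) =
      C (∏ j ∈ d.support, ζ j ^ d j) * monomial d 1 := by
    rw [Finsupp.prod]
    simp_rw [mul_pow]
    rw [Finset.prod_mul_distrib]
    congr 1
    · rw [map_prod]
      simp [map_pow]
    · rw [monomial_eq, C_1, one_mul, Finsupp.prod]
  have h2 : (∏ j ∈ d.support, ζ j ^ d j) = ∏ j, ζ j ^ d j := by
    apply Finset.prod_subset (Finset.subset_univ _)
    intro x _ hx
    simp [Finsupp.notMem_support_iff.mp hx]
  rw [h1, h2, algebraMap_eq, ← mul_assoc, ← C_mul, C_mul_monomial, mul_one, mul_comm c]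

/-- For `n ≥ 1`, `a ≥ 1`, let the group of vectors `ζ ∈ ℂⁿ` with
`ζ_j^a = 1` for all `j` and `∏_j ζ_j = 1` act on `ℂ[u₁,…,uₙ]` by the ℂ-algebra
automorphisms `u_j ↦ ζ_j·u_j`.  A polynomial is fixed by every such automorphism iff it
lies in the ℂ-subalgebra generated by `u₁⋯uₙ` and `u_j^a`, `j = 1,…,n`. -/
theorem invariant_polynomials_eq_adjoin (n a : ℕ) (hn : 1 ≤ n) (ha : 1 ≤ a)
    (p : MvPolynomial (Fin n) ℂ) :
    (∀ ζ : Fin n → ℂ, (∀ j, ζ j ^ a = 1) → (∏ j, ζ j = 1) →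
        aeval (fun j => C (ζ j) * X j) p = p)
      ↔ p ∈ Algebra.adjoin ℂ
          (insert (∏ j, X j : MvPolynomial (Fin n) ℂ)
            (Set.range fun j : Fin n => (X j : MvPolynomial (Fin n) ℂ) ^ a)) := by
  constructor
  · intro h
    -- each exponent vector in the support has all components congruent mod `a`
    have hω : IsPrimitiveRoot (Complex.exp (2 * Real.pi * Complex.I / a)) a :=
      Complex.isPrimitiveRoot_exp a (by omega)
    set ω : ℂ := Complex.exp (2 * Real.pi * Complex.I / a) with hωdef
    have hωa : ω ^ a = 1 := hω.pow_eq_one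
    have key : ∀ d ∈ p.support, ∀ j k : Fin n, d j % a = d k % a := by
      intro d hd j k
      by_cases hjk : j = k
      · rw [hjk]
      · set c : Fin n → ℕ := fun i =>
          (if i = j then 1 else 0) + (if i = k then a - 1 else 0) with hc
        set ζ : Fin n → ℂ := fun i => ω ^ c i with hζ
        have hζ1 : ∀ i, ζ i ^ a = 1 := by
          intro i
          rw [hζ]
          simp only
          rw [← pow_mul, mul_comm, pow_mul, hωa, one_pow]
        have hcsum : ∑ i, c i = a := by
          rw [hc]
          simp only
          rw [Finset.sum_add_distrib, Finset.sum_ite_eq' Finset.univ j fun _ => 1,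
            Finset.sum_ite_eq' Finset.univ k fun _ => a - 1]
          simp only [Finset.mem_univ, if_true]
          omega
        have hζ2 : ∏ i, ζ i = 1 := by
          rw [hζ]
          simp only
          rw [Finset.prod_pow_eq_pow_sum, hcsum, hωa]
        have heq := h ζ hζ1 hζ2
        have hcoeff : (∏ i, ζ i ^ d i) * coeff d p = coeff d p := by
          conv_rhs => rw [← heq, p.as_sum, map_sum]
          simp_rw [aeval_scale]
          rw [coeff_sum]
          simp only [coeff_monomial]
          rw [Finset.sum_ite_eq' p.support d]
          simp [hd]
        have hne : coeff d p ≠ 0 := mem_support_iff.mp hd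
        have hprod : (∏ i, ζ i ^ d i) = 1 :=
          mul_right_cancel₀ hne (hcoeff.trans (one_mul _).symm)
        have hprod2 : ω ^ (d j + (a - 1) * d k) = 1 := by
          rw [← hprod, hζ]
          simp only
          simp_rw [← pow_mul]
          rw [Finset.prod_pow_eq_pow_sum]
          congr 1
          rw [hc]
          simp only [add_mul, ite_mul, one_mul, zero_mul]
          rw [Finset.sum_add_distrib, Finset.sum_ite_eq' Finset.univ j fun i => d i,
            Finset.sum_ite_eq' Finset.univ k fun i => (a - 1) * d i]
          simp
        have hdvd : a ∣ d j + (a - 1) * d k := (hω.pow_eq_one_iff_dvd _).mp hprod2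
        have h0 : (d j + (a - 1) * d k) % a = 0 % a := Nat.modEq_zero_iff_dvd.mpr hdvd
        calc d j % a = (d j + a * d k) % a := (Nat.add_mul_mod_self_left _ _ _).symm
          _ = ((d j + (a - 1) * d k) + d k) % a := by
              congr 1
              obtain ⟨b, rfl⟩ := Nat.exists_eq_succ_of_ne_zero (show a ≠ 0 by omega)
              simp only [Nat.succ_sub_one, Nat.succ_eq_add_one]
              ring
          _ = (0 + d k) % a := Nat.ModEq.add_right _ h0
          _ = d k % a := by rw [zero_add]
    -- now show each monomial is in the adjoin
    rw [p.as_sum]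
    apply Subalgebra.sum_mem
    intro d hd
    have hmon : (monomial d (coeff d p)) = C (coeff d p) * monomial d 1 := by
      rw [C_mul_monomial, mul_one]
    rw [hmon, monomial_one_eq_prod]
    apply Subalgebra.mul_mem
    · exact Subalgebra.algebraMap_mem _ _
    · set r := d (⟨0, hn⟩ : Fin n) % a with hr
      have hdj : ∀ j, d j = r + a * (d j / a) := by
        intro j
        conv_lhs => rw [← Nat.div_add_mod (d j) a]
        rw [key d hd j (⟨0, hn⟩ : Fin n), ← hr, add_comm]
      have : ∏ j, (X j : MvPolynomial (Fin n) ℂ) ^ d j =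
          (∏ j, (X j : MvPolynomial (Fin n) ℂ)) ^ r *
            ∏ j, ((X j : MvPolynomial (Fin n) ℂ) ^ a) ^ (d j / a) := by
        rw [← Finset.prod_pow, ← Finset.prod_mul_distrib]
        apply Finset.prod_congr rfl
        intro j _
        rw [← pow_mul, ← pow_add, ← hdj j]
      rw [this]
      apply Subalgebra.mul_mem
      · exact Subalgebra.pow_mem _ (Algebra.subset_adjoin (Set.mem_insert _ _)) _
      · apply Subalgebra.prod_mem
        intro j _
        exact Subalgebra.pow_mem _
          (Algebra.subset_adjoin (Set.mem_insert_of_mem _ (Set.mem_range_self j))) _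
  · intro hp ζ hζ1 hζ2
    have : p ∈ AlgHom.equalizer (aeval (fun j => C (ζ j) * X j))
        (AlgHom.id ℂ (MvPolynomial (Fin n) ℂ)) := by
      apply Algebra.adjoin_le _ hp
      rintro x (rfl | ⟨j, rfl⟩) <;>
        rw [SetLike.mem_coe, AlgHom.mem_equalizer, AlgHom.id_apply]
      · rw [map_prod]
        simp only [aeval_X]
        rw [Finset.prod_mul_distrib, ← map_prod, hζ2, map_one, one_mul]
      · rw [map_pow, aeval_X, mul_pow, ← C_pow, hζ1 j, C_1, one_mul]
    exact this
end
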